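/- arXiv:1403.3280 — 7 statements merged into one kernel-verified Lean document; each statement's English description precedes it below -/
import Mathlib

section
/- Let {(M_t, Z_t); t ≥ 1} be i.i.d. random elements in R^{d×d} × R^d. If (∏_{j=1}^{t-1} M_j) Z_t → 0 almost surely as t → ∞, then for every x > 0, ∑_{t=1}^∞ P( min_{1 ≤ k ≤ t-1} |(∏_{j=k}^{t-1} M_j) Z_t| > x ) < ∞. -/
open MeasureTheory ProbabilityTheory Filter

noncomputable section

instance {m n α : Type*} [MeasurableSpace α] : MeasurableSpace (Matrix m n α) :=
  inferInstanceAs (MeasurableSpace (m → n → α))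

/-- The sequence `W` is i.i.d. under `μ`. -/
def IsIIDSeq {Ω β : Type*} [MeasurableSpace Ω] [MeasurableSpace β]
    (μ : Measure Ω) (W : ℕ → Ω → β) : Prop :=
  iIndepFun W μ ∧ ∀ t, IdentDistrib (W t) (W 0) μ μ

/-- The ordered product `M 0 * M 1 * ⋯ * M (n-1)` (the paper's `M₁ M₂ ⋯ Mₙ`, in
0-based indexing; the empty product is the identity matrix). -/
def prodTo {Ω : Type*} {d : ℕ} (M : ℕ → Ω → Matrix (Fin d) (Fin d) ℝ) (n : ℕ) (ω : Ω) :
    Matrix (Fin d) (Fin d) ℝ :=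
  ((List.range n).map (fun j => M j ω)).prod

/-- The ordered product `M a * M (a+1) * ⋯ * M (b-1)` (empty product for `a ≥ b`). -/
def prodSeg {Ω : Type*} {d : ℕ} (M : ℕ → Ω → Matrix (Fin d) (Fin d) ℝ) (a b : ℕ) (ω : Ω) :
    Matrix (Fin d) (Fin d) ℝ :=
  ((List.range (b - a)).map (fun j => M (a + j) ω)).prod

/-- Application of a matrix to a vector of Euclidean space (so that the norms involved
are the Euclidean norm and the induced spectral operator norm). -/
def app {d : ℕ} (A : Matrix (Fin d) (Fin d) ℝ) (v : EuclideanSpace ℝ (Fin d)) :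
    EuclideanSpace ℝ (Fin d) :=
  Matrix.toEuclideanCLM (𝕜 := ℝ) A v

/-- The spectral norm of a matrix: the operator norm induced by the Euclidean norm. -/
def sNorm {d : ℕ} (A : Matrix (Fin d) (Fin d) ℝ) : ℝ :=
  ‖Matrix.toEuclideanCLM (𝕜 := ℝ) A‖

/-- Outer product `u vᵀ` of two vectors. -/
def outer {d : ℕ} (u v : EuclideanSpace ℝ (Fin d)) : Matrix (Fin d) (Fin d) ℝ :=
  Matrix.of fun i j => u i * v j

namespace Stmt1
open scoped Topology ENNReal
variable {d : ℕ}
abbrev Mat (d : ℕ) := Matrix (Fin d) (Fin d) ℝ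
abbrev Euc (d : ℕ) := EuclideanSpace ℝ (Fin d)

section Ev
variable {Ω : Type*}

/-- The basic event: all suffix-window products starting in `[σ, σ+m)` and ending at `σ+m`
applied to `Z (σ+m)` have norm `> x`. -/
def Bev (M : ℕ → Ω → Mat d) (Z : ℕ → Ω → Euc d) (x : ℝ) (σ m : ℕ) : Set Ω :=
  {ω | ∀ a, a < m → x < ‖app (prodSeg M (σ + a) (σ + m) ω) (Z (σ + m) ω)‖}

lemma prodSeg_congr {M M' : ℕ → Ω → Mat d} {a b a' b' : ℕ} (ω ω' : Ω)
    (hlen : b - a = b' - a') (h : ∀ j, j < b - a → M (a + j) ω = M' (a' + j) ω') :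
    prodSeg M a b ω = prodSeg M' a' b' ω' := by
  unfold prodSeg
  rw [← hlen]
  congr 1
  apply List.map_congr_left
  intro j hj
  exact h j (List.mem_range.mp hj)

lemma Bev_zero_eq (M : ℕ → Ω → Mat d) (Z : ℕ → Ω → Euc d) (x : ℝ) (n : ℕ) :
    Bev M Z x 0 n = {ω | ∀ k < n, x < ‖app (prodSeg M k n ω) (Z n ω)‖} := by
  ext ω
  simp only [Bev, Set.mem_setOf_eq, Nat.zero_add]

lemma prodSeg_zero (M : ℕ → Ω → Mat d) (n : ℕ) (ω : Ω) :
    prodSeg M 0 n ω = prodTo M n ω := by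
  unfold prodSeg prodTo
  simp

end Ev

section Meas2
variable {Ω : Type*} [mΩ : MeasurableSpace Ω]

lemma measurable_matmul {f g : Ω → Mat d} (hf : Measurable f) (hg : Measurable g) :
    Measurable fun ω => f ω * g ω := by
  apply measurable_pi_lambda; intro i; apply measurable_pi_lambda; intro k
  have : (fun ω => (f ω * g ω) i k) = fun ω => ∑ j, f ω i j * g ω j k := by
    funext ω; simp [Matrix.mul_apply]
  rw [this]
  exact Finset.measurable_sum _ fun j _ =>
    (((measurable_pi_apply j).comp ((measurable_pi_apply i).comp hf)).mul
      ((measurable_pi_apply k).comp ((measurable_pi_apply j).comp hg)))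

lemma measurable_listProd (M : ℕ → Ω → Mat d) (l : List ℕ)
    (h : ∀ j ∈ l, Measurable (M j)) :
    Measurable fun ω => (l.map (fun j => M j ω)).prod := by
  induction l with
  | nil => simp only [List.map_nil, List.prod_nil]; exact measurable_const
  | cons a l ih =>
      simp only [List.map_cons, List.prod_cons]
      exact measurable_matmul (h a (by simp)) (ih (fun j hj => h j (by simp [hj])))

lemma measurable_prodSeg (M : ℕ → Ω → Mat d) (a b : ℕ)
    (h : ∀ j, a ≤ j → j < b → Measurable (M j)) :
    Measurable fun ω => prodSeg M a b ω := by
  apply measurable_listProd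
  intro j hj
  simp only [List.mem_range] at hj
  exact h (a + j) (Nat.le_add_right _ _) (by omega)

lemma measurable_app {f : Ω → Mat d} {g : Ω → Euc d} (hf : Measurable f)
    (hg : Measurable g) : Measurable fun ω => app (f ω) (g ω) := by
  refine (WithLp.measurable_toLp 2 _).comp (f := fun ω => (app (f ω) (g ω)).ofLp) ?_
  apply measurable_pi_lambda
  intro j
  have hcoord : ∀ (A : Mat d) (v : Euc d), app A v j = ∑ k, A j k * v k := by
    intro A v
    have := congrFun (Matrix.ofLp_toEuclideanCLM (𝕜 := ℝ) A v) j
    simpa [app, Matrix.toLin'_apply, Matrix.mulVec, dotProduct] using this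
  have : (fun ω => app (f ω) (g ω) j) = fun ω => ∑ k, f ω j k * g ω k := by
    funext ω; exact hcoord _ _
  rw [this]
  exact Finset.measurable_sum _ fun k _ =>
    ((measurable_pi_apply k).comp ((measurable_pi_apply j).comp hf)).mul
      ((measurable_pi_apply k).comp ((WithLp.measurable_ofLp 2 _).comp hg))

lemma measurableSet_Bev (M : ℕ → Ω → Mat d) (Z : ℕ → Ω → Euc d) (x : ℝ) (σ m : ℕ)
    (hM : ∀ j, σ ≤ j → j < σ + m → Measurable (M j)) (hZ : Measurable (Z (σ + m))) :
    MeasurableSet (Bev M Z x σ m) := by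
  have : Bev M Z x σ m =
      ⋂ a ∈ Set.Iio m, {ω | x < ‖app (prodSeg M (σ + a) (σ + m) ω) (Z (σ + m) ω)‖} := by
    ext ω; simp [Bev]
  rw [this]
  apply MeasurableSet.biInter (Set.to_countable _)
  intro a ha
  have hmeas : Measurable fun ω => ‖app (prodSeg M (σ + a) (σ + m) ω) (Z (σ + m) ω)‖ :=
    measurable_norm.comp (measurable_app
      (measurable_prodSeg M _ _ (fun j h1 h2 => hM j (by omega) h2)) hZ)
  exact measurableSet_lt measurable_const hmeas

end Meas2

lemma prodSeg_congr2 {Ω Ω' : Type*} {M : ℕ → Ω → Mat d} {M' : ℕ → Ω' → Mat d}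
    {a b a' b' : ℕ} (ω : Ω) (ω' : Ω')
    (hlen : b - a = b' - a') (h : ∀ j, j < b - a → M (a + j) ω = M' (a' + j) ω') :
    prodSeg M a b ω = prodSeg M' a' b' ω' := by
  unfold prodSeg
  rw [← hlen]
  congr 1
  apply List.map_congr_left
  intro j hj
  exact h j (List.mem_range.mp hj)

section Law
variable {Ω : Type*} [mΩ : MeasurableSpace Ω] {μ : Measure Ω} [IsProbabilityMeasure μ]

abbrev Pair (d : ℕ) := Mat d × Euc d

/-- finite tuple of the pair sequence, starting at `σ`, length `K`. -/
def tup (V : ℕ → Ω → Pair d) (σ K : ℕ) : Ω → (Fin K → Pair d) := fun ω j => V (σ + j) ω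

lemma measurable_tup {V : ℕ → Ω → Pair d} (hV : ∀ t, Measurable (V t)) (σ K : ℕ) :
    Measurable (tup V σ K) :=
  measurable_pi_lambda _ fun j => hV (σ + j)

/-- matrix coordinates on tuple space (padded by `1`). -/
def MK (d K : ℕ) : ℕ → (Fin K → Pair d) → Mat d :=
  fun j g => if h : j < K then (g ⟨j, h⟩).1 else 1

/-- vector coordinates on tuple space (padded by `0`). -/
def ZK (d K : ℕ) : ℕ → (Fin K → Pair d) → Euc d :=
  fun j g => if h : j < K then (g ⟨j, h⟩).2 else 0

lemma measurable_MK (K j : ℕ) : Measurable (MK d K j) := by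
  unfold MK
  by_cases h : j < K
  · simp only [dif_pos h]
    exact measurable_fst.comp (measurable_pi_apply _)
  · simp only [dif_neg h]; exact measurable_const

lemma measurable_ZK (K j : ℕ) : Measurable (ZK d K j) := by
  unfold ZK
  by_cases h : j < K
  · simp only [dif_pos h]
    exact measurable_snd.comp (measurable_pi_apply _)
  · simp only [dif_neg h]; exact measurable_const

lemma Bev_preimage {M : ℕ → Ω → Mat d} {Z : ℕ → Ω → Euc d} (x : ℝ) (σ m K : ℕ)
    (hmK : m < K) :
    Bev M Z x σ m = (tup (fun t ω => (M t ω, Z t ω)) σ K) ⁻¹' (Bev (MK d K) (ZK d K) x 0 m) := by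
  ext ω
  simp only [Bev, Set.mem_preimage, Set.mem_setOf_eq, Nat.zero_add]
  apply forall_congr'
  intro a
  apply imp_congr_right
  intro ha
  have hZeq : ZK d K m (tup (fun t ω => (M t ω, Z t ω)) σ K ω) = Z (σ + m) ω := by
    simp only [ZK, dif_pos hmK, tup]
  have hPeq : prodSeg (MK d K) a m (tup (fun t ω => (M t ω, Z t ω)) σ K ω)
      = prodSeg M (σ + a) (σ + m) ω := by
    apply prodSeg_congr2
    · omega
    · intro j hj
      have hjm : a + j < m := by
        have := Nat.add_lt_of_lt_sub' hj
        omega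
      have hj' : a + j < K := by omega
      simp only [MK, dif_pos hj', tup]
      show M (σ + (a + j)) ω = M (σ + a + j) ω
      rw [Nat.add_assoc]
  rw [hZeq, hPeq]

lemma map_tup_eq {V : ℕ → Ω → Pair d} (hV : ∀ t, Measurable (V t))
    (hind : iIndepFun V μ)
    (hident : ∀ t, IdentDistrib (V t) (V 0) μ μ) (σ K : ℕ) :
    Measure.map (tup V σ K) μ = Measure.pi (fun _ : Fin K => Measure.map (V 0) μ) := by
  have hprob : IsProbabilityMeasure (Measure.map (V 0) μ) :=
    Measure.isProbabilityMeasure_map (hV 0).aemeasurable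
  symm
  apply Measure.pi_eq
  intro s hs
  rw [Measure.map_apply (measurable_tup hV σ K) (MeasurableSet.univ_pi hs)]
  have hpre : tup V σ K ⁻¹' Set.pi Set.univ s = ⋂ j : Fin K, V (σ + j) ⁻¹' s j := by
    ext ω
    simp [tup, Set.mem_pi]
  rw [hpre]
  have hmarg : ∀ (t : ℕ) (A : Set (Pair d)), MeasurableSet A →
      μ (V t ⁻¹' A) = Measure.map (V 0) μ A := by
    intro t A hA
    rw [← Measure.map_apply (hV t) hA, (hident t).map_eq]
  set sets : ℕ → Set (Pair d) :=
    fun i => if h : i - σ < K ∧ σ ≤ i then s ⟨i - σ, h.1⟩ else Set.univ with hsets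
  have hsets_meas : ∀ i, MeasurableSet (sets i) := by
    intro i
    rw [hsets]
    by_cases h : i - σ < K ∧ σ ≤ i
    · simp only [dif_pos h]; exact hs _
    · simp only [dif_neg h]; exact MeasurableSet.univ
  have hsets_at : ∀ (a : ℕ) (h : a < K), sets (σ + a) = s ⟨a, h⟩ := by
    intro a h
    simp only [hsets]
    have hc : σ + a - σ < K ∧ σ ≤ σ + a := ⟨by omega, by omega⟩
    rw [dif_pos hc]
    exact congrArg s (Fin.val_injective (by simp))
  set S : Finset ℕ := (Finset.range K).image (fun a => σ + a) with hS
  have hinter : (⋂ j : Fin K, V (σ + j) ⁻¹' s j) = ⋂ i ∈ S, V i ⁻¹' sets i := by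
    ext ω
    simp only [Set.mem_iInter, Set.mem_preimage, hS, Finset.mem_image, Finset.mem_range]
    constructor
    · rintro h i ⟨a, ha, rfl⟩
      rw [hsets_at a ha]
      exact h ⟨a, ha⟩
    · intro h j
      have := h (σ + (j : ℕ)) ⟨j, j.isLt, rfl⟩
      rwa [hsets_at _ j.isLt] at this
  rw [hinter]
  rw [hind.measure_inter_preimage_eq_mul S (fun i _ => hsets_meas i)]
  rw [hS, Finset.prod_image (by intro a _ b _ h; simp only at h; omega)]
  have hfac : ∀ a ∈ Finset.range K,
      μ (V (σ + a) ⁻¹' sets (σ + a)) = Measure.map (V 0) μ (sets (σ + a)) := by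
    intro a ha
    exact hmarg _ _ (hsets_meas _)
  rw [Finset.prod_congr rfl hfac]
  rw [← Fin.prod_univ_eq_prod_range (fun a => Measure.map (V 0) μ (sets (σ + a))) K]
  apply Finset.prod_congr rfl
  intro i _
  rw [hsets_at _ i.isLt]

end Law

section Main
variable {Ω : Type*} [mΩ : MeasurableSpace Ω] {μ : Measure Ω} [IsProbabilityMeasure μ]
variable {M : ℕ → Ω → Mat d} {Z : ℕ → Ω → Euc d}

/-- σ-algebra generated by the pairs with indices in `S`. -/
def FF (M : ℕ → Ω → Mat d) (Z : ℕ → Ω → Euc d) (S : Set ℕ) : MeasurableSpace Ω :=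
  ⨆ j ∈ S, MeasurableSpace.comap (fun ω => (M j ω, Z j ω)) inferInstance

lemma measurable_pair_FF {S : Set ℕ} {j : ℕ} (hj : j ∈ S) :
    Measurable[FF M Z S] (fun ω => (M j ω, Z j ω)) := by
  rw [measurable_iff_comap_le]
  exact le_biSup
    (f := fun j => MeasurableSpace.comap (fun ω => (M j ω, Z j ω)) inferInstance) hj

lemma measurableSet_Bev_FF (x : ℝ) {S : Set ℕ} (σ m : ℕ)
    (hS : ∀ j, σ ≤ j → j ≤ σ + m → j ∈ S) :
    MeasurableSet[FF M Z S] (Bev M Z x σ m) := by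
  apply measurableSet_Bev (mΩ := FF M Z S)
  · intro j h1 h2
    exact (measurable_pair_FF (hS j h1 (by omega))).fst
  · exact (measurable_pair_FF (hS (σ + m) (by omega) le_rfl)).snd

lemma FF_le (hM : ∀ t, Measurable (M t)) (hZ : ∀ t, Measurable (Z t)) (S : Set ℕ) :
    FF M Z S ≤ mΩ :=
  iSup₂_le fun j _ => ((hM j).prodMk (hZ j)).comap_le

lemma indep_FF (hM : ∀ t, Measurable (M t)) (hZ : ∀ t, Measurable (Z t))
    (hind : iIndepFun (fun t ω => (M t ω, Z t ω)) μ) (s : ℕ) :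
    Indep (FF M Z {j | j ≤ s}) (FF M Z {j | s < j}) μ := by
  apply ProbabilityTheory.indep_iSup_of_disjoint
    (fun j => ((hM j).prodMk (hZ j)).comap_le) hind
  rw [Set.disjoint_left]
  intro j hj hj'
  simp only [Set.mem_setOf_eq] at hj hj'
  omega

lemma indep_events (hM : ∀ t, Measurable (M t)) (hZ : ∀ t, Measurable (Z t))
    (hind : iIndepFun (fun t ω => (M t ω, Z t ω)) μ) (s : ℕ)
    {F G : Set Ω} (hF : MeasurableSet[FF M Z {j | j ≤ s}] F)
    (hG : MeasurableSet[FF M Z {j | s < j}] G) :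
    μ (F ∩ G) = μ F * μ G :=
  ((indep_FF hM hZ hind s).indepSet_of_measurableSet hF hG).measure_inter_eq_mul

/-- The "relaxed restart event": some window of length `> N` ending after `σ` works. -/
def Rx (M : ℕ → Ω → Mat d) (Z : ℕ → Ω → Euc d) (x : ℝ) (N σ : ℕ) : Set Ω :=
  ⋃ m, ⋃ (_ : N < m), Bev M Z x σ m

lemma measurableSet_Rx_FF (x : ℝ) (N s : ℕ) :
    MeasurableSet[FF M Z {j | s < j}] (Rx M Z x N (s + 1)) := by
  apply MeasurableSet.iUnion
  intro m
  apply MeasurableSet.iUnion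
  intro _
  exact measurableSet_Bev_FF x (s + 1) m (fun j h1 h2 => by simp only [Set.mem_setOf_eq]; omega)

lemma measurableSet_Bev' (hM : ∀ t, Measurable (M t)) (hZ : ∀ t, Measurable (Z t))
    (x : ℝ) (σ m : ℕ) : MeasurableSet (Bev M Z x σ m) :=
  measurableSet_Bev M Z x σ m (fun j _ _ => hM j) (hZ _)

lemma measurableSet_Rx (hM : ∀ t, Measurable (M t)) (hZ : ∀ t, Measurable (Z t))
    (x : ℝ) (N σ : ℕ) : MeasurableSet (Rx M Z x N σ) :=
  MeasurableSet.iUnion fun m => MeasurableSet.iUnion fun _ => measurableSet_Bev' hM hZ x σ m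

/-- Shift invariance of the measure of the relaxed restart event. -/
lemma measure_Rx_eq (hM : ∀ t, Measurable (M t)) (hZ : ∀ t, Measurable (Z t))
    (hind : iIndepFun (fun t ω => (M t ω, Z t ω)) μ)
    (hident : ∀ t, IdentDistrib (fun ω => (M t ω, Z t ω)) (fun ω => (M 0 ω, Z 0 ω)) μ μ)
    (x : ℝ) (N σ : ℕ) :
    μ (Rx M Z x N σ) = μ (Rx M Z x N 0) := by
  set V : ℕ → Ω → Pair d := fun t ω => (M t ω, Z t ω) with hV
  have hVm : ∀ t, Measurable (V t) := fun t => (hM t).prodMk (hZ t)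
  -- truncated versions
  set RxT : ℕ → ℕ → Set Ω := fun σ K => ⋃ m, ⋃ (_ : N < m ∧ m ≤ K), Bev M Z x σ m with hRxT
  have htrunc : ∀ σ, Rx M Z x N σ = ⋃ K, RxT σ K := by
    intro σ
    ext ω
    simp only [Rx, hRxT, Set.mem_iUnion]
    constructor
    · rintro ⟨m, hm, hω⟩; exact ⟨m, m, ⟨hm, le_rfl⟩, hω⟩
    · rintro ⟨K, m, ⟨hm, _⟩, hω⟩; exact ⟨m, hm, hω⟩
  have hmono : ∀ σ, Monotone (RxT σ) := by
    intro σ K1 K2 hK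
    apply Set.iUnion_mono
    intro m
    exact Set.iUnion_mono' fun h => ⟨⟨h.1, h.2.trans hK⟩, le_rfl⟩
  -- tuple-space version of the truncated event
  have hTT : ∀ σ K, RxT σ K = (tup V σ (K + 1)) ⁻¹'
      (⋃ m, ⋃ (_ : N < m ∧ m ≤ K), Bev (MK d (K + 1)) (ZK d (K + 1)) x 0 m) := by
    intro σ K
    rw [hRxT]
    simp only [Set.preimage_iUnion]
    apply Set.iUnion_congr
    intro m
    apply Set.iUnion_congr
    intro hm
    exact Bev_preimage x σ m (K + 1) (by omega)
  have hTTmeas : ∀ K, MeasurableSet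
      (⋃ m, ⋃ (_ : N < m ∧ m ≤ K), Bev (MK d (K + 1)) (ZK d (K + 1)) x 0 m) :=
    fun K => MeasurableSet.iUnion fun m => MeasurableSet.iUnion fun _ =>
      measurableSet_Bev _ _ x 0 m (fun j _ _ => measurable_MK _ j) (measurable_ZK _ _)
  have hmeq : ∀ σ K, μ (RxT σ K) = μ (RxT 0 K) := by
    intro σ K
    rw [hTT σ K, hTT 0 K,
      ← Measure.map_apply (measurable_tup hVm σ (K + 1)) (hTTmeas K),
      ← Measure.map_apply (measurable_tup hVm 0 (K + 1)) (hTTmeas K),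
      map_tup_eq hVm hind hident σ (K + 1), map_tup_eq hVm hind hident 0 (K + 1)]
  rw [htrunc σ, htrunc 0, (hmono σ).measure_iUnion, (hmono 0).measure_iUnion]
  exact iSup_congr fun K => hmeq σ K


/-- Greedy sequence of `R`-separated occurrence events:
`Ee M Z x R i t` is the event that the `i`-th greedy point is at time `t`
(with the `0`-th greedy point artificially at time `0`). -/
def Ee (M : ℕ → Ω → Mat d) (Z : ℕ → Ω → Euc d) (x : ℝ) (R : ℕ) : ℕ → ℕ → Set Ω
  | 0, t => if t = 0 then Set.univ else ∅
  | i + 1, t => ⋃ s, ⋃ (_ : s + R < t),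
      ((Ee M Z x R i s ∩ Bev M Z x 0 t) ∩ ⋂ u, ⋂ (_ : s + R < u ∧ u < t), (Bev M Z x 0 u)ᶜ)

lemma measurableSet_Ee_FF (x : ℝ) (R : ℕ) :
    ∀ i t, MeasurableSet[FF M Z {j | j ≤ t}] (Ee M Z x R i t) := by
  intro i
  induction i with
  | zero =>
      intro t
      by_cases h : t = 0 <;> simp [Ee, h]
  | succ i ih =>
      intro t
      apply MeasurableSet.iUnion
      intro s
      apply MeasurableSet.iUnion
      intro hs
      have hmono : FF M Z {j | j ≤ s} ≤ FF M Z {j | j ≤ t} := by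
        apply biSup_mono
        intro j hj
        simp only [Set.mem_setOf_eq] at hj ⊢
        omega
      apply MeasurableSet.inter
      · apply MeasurableSet.inter
        · exact hmono _ (ih s)
        · exact measurableSet_Bev_FF x 0 t (fun j h1 h2 => by
            simp only [Set.mem_setOf_eq]; omega)
      · apply MeasurableSet.iInter
        intro u
        apply MeasurableSet.iInter
        intro hu
        apply MeasurableSet.compl
        have hmono' : FF M Z {j | j ≤ u} ≤ FF M Z {j | j ≤ t} := by
          apply biSup_mono
          intro j hj
          simp only [Set.mem_setOf_eq] at hj ⊢
          omega
        exact hmono' _ (measurableSet_Bev_FF x 0 u (fun j h1 h2 => by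
          simp only [Set.mem_setOf_eq]; omega))

lemma measurableSet_Ee (hM : ∀ t, Measurable (M t)) (hZ : ∀ t, Measurable (Z t))
    (x : ℝ) (R i t : ℕ) : MeasurableSet (Ee M Z x R i t) :=
  FF_le hM hZ {j | j ≤ t} _ (measurableSet_Ee_FF x R i t)

lemma Ee_disj_lt (x : ℝ) (R : ℕ) :
    ∀ i t t', t < t' → ∀ ω, ω ∈ Ee M Z x R i t → ω ∈ Ee M Z x R i t' → False := by
  intro i
  induction i with
  | zero =>
      intro t t' htt ω h1 h2
      by_cases h : t' = 0
      · omega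
      · simp [Ee, h] at h2
  | succ i ih =>
      intro t t' htt ω h1 h2
      simp only [Ee, Set.mem_iUnion] at h1 h2
      obtain ⟨s, hs, ⟨⟨hE, hB⟩, hno⟩⟩ := h1
      obtain ⟨s', hs', ⟨⟨hE', hB'⟩, hno'⟩⟩ := h2
      have hss : s = s' := by
        rcases Nat.lt_trichotomy s s' with h | h | h
        · exact absurd (ih s s' h ω hE hE') (fun f => f)
        · exact h
        · exact absurd (ih s' s h ω hE' hE) (fun f => f)
      subst hss
      simp only [Set.mem_iInter] at hno'
      exact hno' t ⟨hs, htt⟩ hB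

lemma Ee_pairwise_disjoint (x : ℝ) (R i : ℕ) :
    Pairwise (Function.onFun Disjoint (fun t => Ee M Z x R i t)) := by
  intro t t' htt
  rw [Function.onFun, Set.disjoint_left]
  intro ω h1 h2
  rcases Nat.lt_trichotomy t t' with h | h | h
  · exact Ee_disj_lt x R i t t' h ω h1 h2
  · exact htt h
  · exact Ee_disj_lt x R i t' t h ω h2 h1

/-- Covering lemma: every occurrence time lies within distance `R` above some greedy point. -/
lemma Ee_cover (x : ℝ) (R : ℕ) (ω : Ω) (n : ℕ) (hn : 0 < n) (hB : ω ∈ Bev M Z x 0 n) :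
    ∃ i t, ω ∈ Ee M Z x R i t ∧ t ≤ n ∧ n ≤ t + R := by
  classical
  set P : ℕ → Prop := fun t => ∃ i, ω ∈ Ee M Z x R i t with hP
  have hP0 : P 0 := ⟨0, by simp [Ee]⟩
  set t0 : ℕ := Nat.findGreatest P n with ht0
  have hPt0 : P t0 := Nat.findGreatest_spec (Nat.zero_le n) hP0
  have ht0n : t0 ≤ n := Nat.findGreatest_le n
  obtain ⟨i0, hEi0⟩ := hPt0
  by_cases hcase : n ≤ t0 + R
  · exact ⟨i0, t0, hEi0, ht0n, hcase⟩
  · exfalso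
    push_neg at hcase
    set Q : ℕ → Prop := fun u => t0 + R < u ∧ ω ∈ Bev M Z x 0 u with hQ
    have hQn : Q n := ⟨hcase, hB⟩
    have hEQ : ∃ u, Q u := ⟨n, hQn⟩
    set t1 : ℕ := Nat.find hEQ with ht1
    have hQt1 : Q t1 := Nat.find_spec hEQ
    have ht1n : t1 ≤ n := Nat.find_min' hEQ hQn
    have hmem : ω ∈ Ee M Z x R (i0 + 1) t1 := by
      simp only [Ee, Set.mem_iUnion]
      refine ⟨t0, hQt1.1, ⟨⟨hEi0, hQt1.2⟩, ?_⟩⟩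
      simp only [Set.mem_iInter]
      intro u hu hBu
      exact Nat.find_min hEQ hu.2 ⟨hu.1, hBu⟩
    have : t1 ≤ t0 := Nat.le_findGreatest ht1n ⟨i0 + 1, hmem⟩
    omega

lemma Bev_shift_subset (x : ℝ) (s t : ℕ) (hst : s + 1 ≤ t) :
    Bev M Z x 0 t ⊆ Bev M Z x (s + 1) (t - (s + 1)) := by
  intro ω hω
  simp only [Bev, Set.mem_setOf_eq, Nat.zero_add] at hω ⊢
  intro a ha
  have h1 : s + 1 + (t - (s + 1)) = t := by omega
  rw [h1]
  exact hω (s + 1 + a) (by omega)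

lemma step_L (hM : ∀ t, Measurable (M t)) (hZ : ∀ t, Measurable (Z t))
    (hind : iIndepFun (fun t ω => (M t ω, Z t ω)) μ)
    (hident : ∀ t, IdentDistrib (fun ω => (M t ω, Z t ω)) (fun ω => (M 0 ω, Z 0 ω)) μ μ)
    (x : ℝ) (N i : ℕ) :
    μ (⋃ t, Ee M Z x (N + 1) (i + 1) t)
      ≤ μ (Rx M Z x N 0) * μ (⋃ t, Ee M Z x (N + 1) i t) := by
  have hsub : (⋃ t, Ee M Z x (N + 1) (i + 1) t)
      ⊆ ⋃ s, (Ee M Z x (N + 1) i s ∩ Rx M Z x N (s + 1)) := by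
    intro ω hω
    simp only [Set.mem_iUnion] at hω ⊢
    obtain ⟨t, ht⟩ := hω
    simp only [Ee, Set.mem_iUnion] at ht
    obtain ⟨s, hs, ⟨⟨hE, hB⟩, _⟩⟩ := ht
    refine ⟨s, hE, ?_⟩
    simp only [Rx, Set.mem_iUnion]
    exact ⟨t - (s + 1), by omega, Bev_shift_subset x s t (by omega) hB⟩
  calc μ (⋃ t, Ee M Z x (N + 1) (i + 1) t)
      ≤ μ (⋃ s, (Ee M Z x (N + 1) i s ∩ Rx M Z x N (s + 1))) := measure_mono hsub
    _ ≤ ∑' s, μ (Ee M Z x (N + 1) i s ∩ Rx M Z x N (s + 1)) := measure_iUnion_le _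
    _ = ∑' s, μ (Ee M Z x (N + 1) i s) * μ (Rx M Z x N (s + 1)) := by
        apply tsum_congr
        intro s
        exact indep_events hM hZ hind s (measurableSet_Ee_FF x (N + 1) i s)
          (measurableSet_Rx_FF x N s)
    _ = ∑' s, μ (Ee M Z x (N + 1) i s) * μ (Rx M Z x N 0) := by
        apply tsum_congr
        intro s
        rw [measure_Rx_eq hM hZ hind hident x N (s + 1)]
    _ = (∑' s, μ (Ee M Z x (N + 1) i s)) * μ (Rx M Z x N 0) := ENNReal.tsum_mul_right
    _ = μ (⋃ t, Ee M Z x (N + 1) i t) * μ (Rx M Z x N 0) := by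
        rw [measure_iUnion (Ee_pairwise_disjoint x (N + 1) i)
          (fun t => measurableSet_Ee hM hZ x (N + 1) i t)]
    _ = μ (Rx M Z x N 0) * μ (⋃ t, Ee M Z x (N + 1) i t) := mul_comm _ _

lemma L_geom (hM : ∀ t, Measurable (M t)) (hZ : ∀ t, Measurable (Z t))
    (hind : iIndepFun (fun t ω => (M t ω, Z t ω)) μ)
    (hident : ∀ t, IdentDistrib (fun ω => (M t ω, Z t ω)) (fun ω => (M 0 ω, Z 0 ω)) μ μ)
    (x : ℝ) (N : ℕ) :
    ∀ i, μ (⋃ t, Ee M Z x (N + 1) i t) ≤ (μ (Rx M Z x N 0)) ^ i := by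
  intro i
  induction i with
  | zero => simpa using prob_le_one
  | succ i ih =>
      calc μ (⋃ t, Ee M Z x (N + 1) (i + 1) t)
          ≤ μ (Rx M Z x N 0) * μ (⋃ t, Ee M Z x (N + 1) i t) :=
            step_L hM hZ hind hident x N i
        _ ≤ μ (Rx M Z x N 0) * (μ (Rx M Z x N 0)) ^ i := mul_le_mul_right ih _
        _ = (μ (Rx M Z x N 0)) ^ (i + 1) := (pow_succ' _ _).symm

lemma exists_N (hM : ∀ t, Measurable (M t)) (hZ : ∀ t, Measurable (Z t))
    {x : ℝ} (hx : 0 < x)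
    (hto0 : ∀ᵐ ω ∂μ, Tendsto (fun t => app (prodTo M t ω) (Z t ω)) atTop (nhds 0)) :
    ∃ N, μ (Rx M Z x N 0) ≤ 2⁻¹ := by
  have hanti : Antitone (fun N => Rx M Z x N 0) := by
    intro N N' h ω hω
    simp only [Rx, Set.mem_iUnion] at hω ⊢
    obtain ⟨m, hm, h2⟩ := hω
    exact ⟨m, by omega, h2⟩
  have hnull : μ (⋂ N, Rx M Z x N 0) = 0 := by
    have hsub : (⋂ N, Rx M Z x N 0)
        ⊆ {ω | ¬ Tendsto (fun t => app (prodTo M t ω) (Z t ω)) atTop (nhds 0)} := by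
      intro ω hω htend
      have hnorm : Tendsto (fun t => ‖app (prodTo M t ω) (Z t ω)‖) atTop (𝓝 0) := by
        have := htend.norm
        simpa using this
      have hev : ∀ᶠ t in atTop, ‖app (prodTo M t ω) (Z t ω)‖ < x :=
        hnorm.eventually_lt_const hx
      obtain ⟨T, hT⟩ := Filter.eventually_atTop.mp hev
      have hωT := Set.mem_iInter.mp hω T
      simp only [Rx, Set.mem_iUnion] at hωT
      obtain ⟨m, hm, hmem⟩ := hωT
      have h0 := hmem 0 (by omega)
      simp only [Nat.zero_add, Nat.add_zero] at h0
      rw [prodSeg_zero] at h0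
      exact absurd h0 (not_lt.2 (le_of_lt (hT m (by omega))))
    exact measure_mono_null hsub (ae_iff.mp hto0)
  have htends : Tendsto (fun N => μ (Rx M Z x N 0)) atTop (𝓝 0) := by
    have := tendsto_measure_iInter_atTop
      (fun N => (measurableSet_Rx hM hZ x N 0).nullMeasurableSet) hanti
      ⟨0, measure_ne_top μ _⟩
    rw [hnull] at this
    exact this
  have hev : ∀ᶠ N in atTop, μ (Rx M Z x N 0) < 2⁻¹ :=
    htends.eventually_lt_const (by simp)
  obtain ⟨N, hN⟩ := hev.exists
  exact ⟨N, le_of_lt hN⟩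

lemma main_bound (hM : ∀ t, Measurable (M t)) (hZ : ∀ t, Measurable (Z t))
    (hind : iIndepFun (fun t ω => (M t ω, Z t ω)) μ)
    (hident : ∀ t, IdentDistrib (fun ω => (M t ω, Z t ω)) (fun ω => (M 0 ω, Z 0 ω)) μ μ)
    (x : ℝ) (N : ℕ) (hN : μ (Rx M Z x N 0) ≤ 2⁻¹) :
    ∑' n : ℕ, μ (Bev M Z x 0 n) ≠ ⊤ := by
  classical
  set R : ℕ := N + 1 with hR
  set θ : ℝ≥0∞ := μ (Rx M Z x N 0) with hθ
  -- the per-n covering bound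
  have hcov : ∀ n : ℕ, μ (Bev M Z x 0 (n + 1)) ≤
      ∑' i : ℕ, ∑' t : ℕ,
        (if t ≤ n + 1 ∧ n + 1 ≤ t + R then μ (Ee M Z x R i t) else 0) := by
    intro n
    have hsub : Bev M Z x 0 (n + 1) ⊆
        ⋃ i : ℕ, ⋃ t : ℕ, ⋃ (_ : t ≤ n + 1 ∧ n + 1 ≤ t + R), Ee M Z x R i t := by
      intro ω hω
      obtain ⟨i, t, hmem, h1, h2⟩ := Ee_cover x R ω (n + 1) (Nat.succ_pos n) hω
      simp only [Set.mem_iUnion]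
      exact ⟨i, t, ⟨h1, h2⟩, hmem⟩
    calc μ (Bev M Z x 0 (n + 1))
        ≤ μ (⋃ i : ℕ, ⋃ t : ℕ, ⋃ (_ : t ≤ n + 1 ∧ n + 1 ≤ t + R), Ee M Z x R i t) :=
          measure_mono hsub
      _ ≤ ∑' i : ℕ, μ (⋃ t : ℕ, ⋃ (_ : t ≤ n + 1 ∧ n + 1 ≤ t + R), Ee M Z x R i t) :=
          measure_iUnion_le _
      _ ≤ ∑' i : ℕ, ∑' t : ℕ, μ (⋃ (_ : t ≤ n + 1 ∧ n + 1 ≤ t + R), Ee M Z x R i t) := by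
          exact Summable.tsum_le_tsum (fun i => measure_iUnion_le _) ENNReal.summable ENNReal.summable
      _ ≤ ∑' i : ℕ, ∑' t : ℕ,
            (if t ≤ n + 1 ∧ n + 1 ≤ t + R then μ (Ee M Z x R i t) else 0) := by
          apply Summable.tsum_le_tsum _ ENNReal.summable ENNReal.summable
          intro i
          apply Summable.tsum_le_tsum _ ENNReal.summable ENNReal.summable
          intro t
          rw [Set.iUnion_eq_if]
          split_ifs with h
          · exact le_rfl
          · simp
  -- counting within a window
  have hwin : ∀ i t : ℕ,
      (∑' n : ℕ, if t ≤ n + 1 ∧ n + 1 ≤ t + R then μ (Ee M Z x R i t) else 0)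
        ≤ (R + 1 : ℕ) * μ (Ee M Z x R i t) := by
    intro i t
    have hfin : ∀ n ∉ Finset.range (t + R),
        (if t ≤ n + 1 ∧ n + 1 ≤ t + R then μ (Ee M Z x R i t) else 0) = 0 := by
      intro n hn
      simp only [Finset.mem_range, not_lt] at hn
      rw [if_neg (by omega)]
    rw [tsum_eq_sum hfin, ← Finset.sum_filter]
    have hcard : ((Finset.range (t + R)).filter
        (fun n => t ≤ n + 1 ∧ n + 1 ≤ t + R)).card ≤ R + 1 := by
      have hsubs : (Finset.range (t + R)).filter (fun n => t ≤ n + 1 ∧ n + 1 ≤ t + R)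
          ⊆ Finset.Ico (t - 1) (t + R) := by
        intro n hn
        simp only [Finset.mem_filter, Finset.mem_range] at hn
        simp only [Finset.mem_Ico]
        omega
      calc ((Finset.range (t + R)).filter _).card
          ≤ (Finset.Ico (t - 1) (t + R)).card := Finset.card_le_card hsubs
        _ = t + R - (t - 1) := Nat.card_Ico _ _
        _ ≤ R + 1 := by omega
    calc ∑ _n ∈ (Finset.range (t + R)).filter
          (fun n => t ≤ n + 1 ∧ n + 1 ≤ t + R), μ (Ee M Z x R i t)
        = ((Finset.range (t + R)).filter
            (fun n => t ≤ n + 1 ∧ n + 1 ≤ t + R)).card • μ (Ee M Z x R i t) :=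
          Finset.sum_const _
      _ = (((Finset.range (t + R)).filter
            (fun n => t ≤ n + 1 ∧ n + 1 ≤ t + R)).card : ℝ≥0∞) * μ (Ee M Z x R i t) :=
          nsmul_eq_mul _ _
      _ ≤ (R + 1 : ℕ) * μ (Ee M Z x R i t) := by
          apply mul_le_mul_left
          exact_mod_cast hcard
  -- assembling
  have hmain : (∑' n : ℕ, μ (Bev M Z x 0 (n + 1)))
      ≤ (R + 1 : ℕ) * (1 - 2⁻¹)⁻¹ := by
    calc (∑' n : ℕ, μ (Bev M Z x 0 (n + 1)))
        ≤ ∑' n : ℕ, ∑' i : ℕ, ∑' t : ℕ,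
            (if t ≤ n + 1 ∧ n + 1 ≤ t + R then μ (Ee M Z x R i t) else 0) :=
          Summable.tsum_le_tsum hcov ENNReal.summable ENNReal.summable
      _ = ∑' i : ℕ, ∑' n : ℕ, ∑' t : ℕ,
            (if t ≤ n + 1 ∧ n + 1 ≤ t + R then μ (Ee M Z x R i t) else 0) :=
          ENNReal.tsum_comm
      _ = ∑' i : ℕ, ∑' t : ℕ, ∑' n : ℕ,
            (if t ≤ n + 1 ∧ n + 1 ≤ t + R then μ (Ee M Z x R i t) else 0) := by
          exact tsum_congr fun i => ENNReal.tsum_comm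
      _ ≤ ∑' i : ℕ, ∑' t : ℕ, (R + 1 : ℕ) * μ (Ee M Z x R i t) := by
          apply Summable.tsum_le_tsum _ ENNReal.summable ENNReal.summable
          intro i
          exact Summable.tsum_le_tsum (hwin i) ENNReal.summable ENNReal.summable
      _ = (R + 1 : ℕ) * ∑' i : ℕ, ∑' t : ℕ, μ (Ee M Z x R i t) := by
          rw [← ENNReal.tsum_mul_left]
          exact tsum_congr fun i => ENNReal.tsum_mul_left.symm ▸ ENNReal.tsum_mul_left
      _ = (R + 1 : ℕ) * ∑' i : ℕ, μ (⋃ t, Ee M Z x R i t) := by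
          congr 1
          exact tsum_congr fun i => (measure_iUnion (Ee_pairwise_disjoint x R i)
            (fun t => measurableSet_Ee hM hZ x R i t)).symm
      _ ≤ (R + 1 : ℕ) * ∑' i : ℕ, θ ^ i := by
          apply mul_le_mul_right
          exact Summable.tsum_le_tsum (L_geom hM hZ hind hident x N) ENNReal.summable ENNReal.summable
      _ ≤ (R + 1 : ℕ) * ∑' i : ℕ, (2⁻¹ : ℝ≥0∞) ^ i := by
          apply mul_le_mul_right
          exact Summable.tsum_le_tsum (fun i => pow_le_pow_left' hN i) ENNReal.summable ENNReal.summable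
      _ = (R + 1 : ℕ) * (1 - 2⁻¹)⁻¹ := by rw [ENNReal.tsum_geometric]
  have hfin : ((R + 1 : ℕ) : ℝ≥0∞) * (1 - 2⁻¹)⁻¹ ≠ ⊤ := by
    apply ENNReal.mul_ne_top (ENNReal.natCast_ne_top _)
    rw [ENNReal.one_sub_inv_two]
    simp
  rw [tsum_eq_zero_add' ENNReal.summable]
  apply ENNReal.add_ne_top.2
  constructor
  · exact ne_of_lt (lt_of_le_of_lt prob_le_one ENNReal.one_lt_top)
  · exact ne_top_of_le_ne_top hfin hmain
end Main
end Stmt1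

/-- If `(M₁⋯M_{t-1}) Z_t → 0` a.s., then for every `x > 0` the series
`∑ₜ P(min_{1 ≤ k ≤ t-1} |(M_k⋯M_{t-1}) Z_t| > x)` is finite.  (In 0-based indexing the
minimum over `k < n` of `|(M_k⋯M_{n-1}) Z_n|` exceeds `x` iff all its entries do; for
`n = 0` the minimum over the empty set is `∞ > x`, i.e. the condition holds vacuously.) -/
theorem statement1 {d : ℕ} {Ω : Type*} [MeasurableSpace Ω] (μ : Measure Ω)
    [IsProbabilityMeasure μ]
    (M : ℕ → Ω → Matrix (Fin d) (Fin d) ℝ) (Z : ℕ → Ω → EuclideanSpace ℝ (Fin d))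
    (hM : ∀ t, Measurable (M t)) (hZ : ∀ t, Measurable (Z t))
    (hiid : IsIIDSeq μ (fun t ω => (M t ω, Z t ω)))
    (hto0 : ∀ᵐ ω ∂μ, Tendsto (fun t => app (prodTo M t ω) (Z t ω)) atTop (nhds 0)) :
    ∀ x : ℝ, 0 < x →
      ∑' n : ℕ, μ {ω | ∀ k < n, x < ‖app (prodSeg M k n ω) (Z n ω)‖} ≠ ⊤ := by
  intro x hx
  have hident : ∀ t, IdentDistrib (fun ω => (M t ω, Z t ω)) (fun ω => (M 0 ω, Z 0 ω)) μ μ :=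
    hiid.2
  obtain ⟨N, hN⟩ := Stmt1.exists_N hM hZ hx hto0
  have h := Stmt1.main_bound hM hZ hiid.1 hident x N hN
  have hsets : ∀ n : ℕ, {ω | ∀ k < n, x < ‖app (prodSeg M k n ω) (Z n ω)‖}
      = Stmt1.Bev M Z x 0 n := fun n => (Stmt1.Bev_zero_eq M Z x n).symm
  simpa only [hsets] using h
end
end

section
/- (Kochen–Stone lemma) Let {A_t; t ≥ 1} be events such that ∑_{t=1}^∞ P(A_t) = ∞ and limsup_{n→∞} (∑_{t=1}^n P(A_t))^2 / (∑_{r=1}^n ∑_{t=1}^n P(A_r ∩ A_t)) = c > 0. Then P(A_t infinitely often) ≥ c. -/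
open MeasureTheory ProbabilityTheory Filter
open scoped ENNReal NNReal

noncomputable section

/-- The Kochen–Stone lemma. -/
theorem statement2 {Ω : Type*} [MeasurableSpace Ω] (μ : Measure Ω) [IsProbabilityMeasure μ]
    (A : ℕ → Set Ω) (hA : ∀ t, MeasurableSet (A t))
    (hdiv : ∑' t : ℕ, μ (A t) = ⊤) (c : ℝ) (hc : 0 < c)
    (hlimsup : Filter.limsup (fun n =>
        (∑ t ∈ Finset.range n, (μ (A t)).toReal) ^ 2 /
          (∑ r ∈ Finset.range n, ∑ t ∈ Finset.range n, (μ (A r ∩ A t)).toReal))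
      atTop = c) :
    c ≤ (μ (Filter.limsup A atTop)).toReal := by

  classical
  set p : ℕ → ℝ := fun t => (μ (A t)).toReal with hp
  set S : ℕ → ℝ := fun n => ∑ t ∈ Finset.range n, p t with hSdef
  set D : ℕ → ℝ := fun n =>
    ∑ r ∈ Finset.range n, ∑ t ∈ Finset.range n, (μ (A r ∩ A t)).toReal with hDdef
  set U : ℕ → Set Ω := fun m => ⋃ t, ⋃ (_ : m ≤ t), A t with hUdef
  have hpnonneg : ∀ t, 0 ≤ p t := fun t => ENNReal.toReal_nonneg
  have hSnonneg : ∀ n, 0 ≤ S n := fun n => Finset.sum_nonneg fun t _ => hpnonneg t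
  have hDnonneg : ∀ n, 0 ≤ D n := fun n =>
    Finset.sum_nonneg fun r _ => Finset.sum_nonneg fun t _ => ENNReal.toReal_nonneg
  -- S tends to infinity
  have hStop : Tendsto S atTop atTop := by
    have h1 : Tendsto (fun n => ∑ t ∈ Finset.range n, μ (A t)) atTop (nhds ⊤) := by
      have := ENNReal.tendsto_nat_tsum (fun t => μ (A t))
      rwa [hdiv] at this
    rw [ENNReal.tendsto_nhds_top_iff_nnreal] at h1
    rw [tendsto_atTop]
    intro b
    have hb := h1 (Real.toNNReal b)
    filter_upwards [hb] with n hn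
    have hne : ∀ t ∈ Finset.range n, μ (A t) ≠ ⊤ := fun t _ => measure_ne_top μ _
    have hSn : S n = (∑ t ∈ Finset.range n, μ (A t)).toReal := (ENNReal.toReal_sum hne).symm
    have hfin : (∑ t ∈ Finset.range n, μ (A t)) ≠ ⊤ :=
      ENNReal.sum_ne_top.mpr fun t _ => measure_ne_top μ _
    have : (b : ℝ) ≤ Real.toNNReal b := Real.le_coe_toNNReal b
    refine this.trans ?_
    rw [hSn]
    have : ((Real.toNNReal b : ℝ≥0∞)).toReal ≤ (∑ t ∈ Finset.range n, μ (A t)).toReal :=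
      ENNReal.toReal_mono hfin hn.le
    simpa using this
  -- Key Cauchy–Schwarz inequality
  have key : ∀ m n, m ≤ n → (S n - S m) ^ 2 ≤ D n * (μ (U m)).toReal := by
    intro m n hmn
    set F : Ω → ℝ≥0∞ := fun ω => ∑ t ∈ Finset.Ico m n, (A t).indicator 1 ω with hFdef
    set B : Set Ω := ⋃ t ∈ Finset.Ico m n, A t with hBdef
    have hBmeas : MeasurableSet B := by
      exact MeasurableSet.biUnion (Finset.Ico m n).countable_toSet fun t _ => hA t
    have hFmeas : Measurable F := by
      apply Finset.measurable_sum
      intro t _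
      exact measurable_const.indicator (hA t)
    have hFzero : ∀ ω, ω ∉ B → F ω = 0 := by
      intro ω hω
      apply Finset.sum_eq_zero
      intro t ht
      have : ω ∉ A t := fun h => hω (Set.mem_biUnion ht h)
      simp [Set.indicator_of_notMem this]
    have hFg : ∀ ω, F ω * B.indicator (1 : Ω → ℝ≥0∞) ω = F ω := by
      intro ω
      by_cases hω : ω ∈ B
      · simp [Set.indicator_of_mem hω]
      · simp [Set.indicator_of_notMem hω, hFzero ω hω]
    have hconj : Real.HolderConjugate 2 2 := Real.HolderConjugate.two_two
    have hCS := ENNReal.lintegral_mul_le_Lp_mul_Lq (f := F)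
      (g := B.indicator (1 : Ω → ℝ≥0∞)) μ hconj hFmeas.aemeasurable
      ((measurable_const.indicator hBmeas).aemeasurable)
    simp only [Pi.mul_apply, hFg] at hCS
    have hgsq : ∀ a, (B.indicator (1 : Ω → ℝ≥0∞)) a ^ (2:ℝ)
        = B.indicator (1 : Ω → ℝ≥0∞) a := by
      intro ω
      by_cases hω : ω ∈ B
      · simp [Set.indicator_of_mem hω]
      · rw [Set.indicator_of_notMem hω]
        exact ENNReal.zero_rpow_of_pos (by norm_num)
    have hfsq : ∀ a, F a ^ (2:ℝ) = F a ^ (2:ℕ) := by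
      intro ω
      rw [show ((2:ℝ)) = ((2:ℕ):ℝ) by norm_num, ENNReal.rpow_natCast]
    simp only [hgsq, hfsq] at hCS
    rw [lintegral_indicator_one hBmeas] at hCS
    -- compute the integrals
    have hintF : ∫⁻ ω, F ω ∂μ = ∑ t ∈ Finset.Ico m n, μ (A t) := by
      simp only [hFdef]
      rw [lintegral_finset_sum (Finset.Ico m n)
        (f := fun t => (A t).indicator (1 : Ω → ℝ≥0∞))
        (fun t _ => measurable_const.indicator (hA t))]
      exact Finset.sum_congr rfl fun t _ => lintegral_indicator_one (hA t)
    have hintF2 : ∫⁻ ω, F ω ^ (2:ℕ) ∂μ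
        = ∑ r ∈ Finset.Ico m n, ∑ t ∈ Finset.Ico m n, μ (A r ∩ A t) := by
      have hexp : ∀ ω, F ω ^ (2:ℕ)
          = ∑ r ∈ Finset.Ico m n, ∑ t ∈ Finset.Ico m n, (A r ∩ A t).indicator 1 ω := by
        intro ω
        rw [sq, hFdef]
        simp only [Finset.sum_mul_sum]
        refine Finset.sum_congr rfl fun r _ => Finset.sum_congr rfl fun t _ => ?_
        rw [Set.inter_indicator_one]
        rfl
      simp_rw [hexp]
      rw [lintegral_finset_sum (Finset.Ico m n)
        (f := fun r ω => ∑ t ∈ Finset.Ico m n, (A r ∩ A t).indicator (1 : Ω → ℝ≥0∞) ω)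
        (fun r _ => Finset.measurable_sum _
          (fun t _ => measurable_const.indicator ((hA r).inter (hA t))))]
      refine Finset.sum_congr rfl fun r _ => ?_
      rw [lintegral_finset_sum (Finset.Ico m n)
        (f := fun t => (A r ∩ A t).indicator (1 : Ω → ℝ≥0∞))
        (fun t _ => measurable_const.indicator ((hA r).inter (hA t)))]
      exact Finset.sum_congr rfl fun t _ => lintegral_indicator_one ((hA r).inter (hA t))
    rw [hintF, hintF2] at hCS
    -- square both sides
    have hsq : (∑ t ∈ Finset.Ico m n, μ (A t)) ^ (2:ℕ)
        ≤ (∑ r ∈ Finset.Ico m n, ∑ t ∈ Finset.Ico m n, μ (A r ∩ A t)) * μ B := by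
      calc (∑ t ∈ Finset.Ico m n, μ (A t)) ^ (2:ℕ)
          ≤ ((∑ r ∈ Finset.Ico m n, ∑ t ∈ Finset.Ico m n, μ (A r ∩ A t)) ^ (1/2:ℝ)
              * μ B ^ (1/2:ℝ)) ^ (2:ℕ) := pow_le_pow_left₀ (by positivity) hCS 2
        _ = (∑ r ∈ Finset.Ico m n, ∑ t ∈ Finset.Ico m n, μ (A r ∩ A t)) * μ B := by
            rw [mul_pow, ← ENNReal.rpow_natCast _ 2, ← ENNReal.rpow_natCast _ 2,
              ← ENNReal.rpow_mul, ← ENNReal.rpow_mul]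
            norm_num
    -- pass to real numbers
    have hfin2 : (∑ r ∈ Finset.Ico m n, ∑ t ∈ Finset.Ico m n, μ (A r ∩ A t)) ≠ ⊤ :=
      ENNReal.sum_ne_top.mpr fun r _ =>
        ENNReal.sum_ne_top.mpr fun t _ => measure_ne_top μ _
    have hreal : (∑ t ∈ Finset.Ico m n, p t) ^ 2
        ≤ (∑ r ∈ Finset.Ico m n, ∑ t ∈ Finset.Ico m n, (μ (A r ∩ A t)).toReal)
            * (μ B).toReal := by
      have := ENNReal.toReal_mono (by
        exact ENNReal.mul_ne_top hfin2 (measure_ne_top μ _)) hsq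
      rw [ENNReal.toReal_pow, ENNReal.toReal_mul,
        ENNReal.toReal_sum (fun t _ => measure_ne_top μ _)] at this
      rw [ENNReal.toReal_sum (fun r _ =>
        ENNReal.sum_ne_top.mpr fun t _ => measure_ne_top μ _)] at this
      convert this using 3
      exact (ENNReal.toReal_sum (fun t _ => measure_ne_top μ _)).symm
    rw [show (∑ t ∈ Finset.Ico m n, p t) = S n - S m from Finset.sum_Ico_eq_sub p hmn] at hreal
    refine hreal.trans (mul_le_mul ?_ ?_ ENNReal.toReal_nonneg (hDnonneg n))
    · -- enlarge the double sum
      refine le_trans (Finset.sum_le_sum fun r _ =>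
        Finset.sum_le_sum_of_subset_of_nonneg
          (fun t ht => Finset.mem_range.2 (Finset.mem_Ico.1 ht).2) (fun t _ _ =>
          ENNReal.toReal_nonneg)) ?_
      exact Finset.sum_le_sum_of_subset_of_nonneg
        (fun r hr => Finset.mem_range.2 (Finset.mem_Ico.1 hr).2) (fun r _ _ =>
        Finset.sum_nonneg fun t _ => ENNReal.toReal_nonneg)
    · refine ENNReal.toReal_mono (measure_ne_top μ _) (measure_mono ?_)
      intro ω hω
      obtain ⟨t, ht, hωt⟩ := Set.mem_iUnion₂.1 hω
      exact Set.mem_iUnion₂.2 ⟨t, (Finset.mem_Ico.1 ht).1, hωt⟩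
  -- the main bound: c ≤ μ (U m) for every m
  have hmain : ∀ m, c ≤ (μ (U m)).toReal := by
    intro m
    by_contra hcon
    push_neg at hcon
    obtain ⟨x, hx1, hx2⟩ := exists_between hcon
    rcases lt_or_ge x 0 with hxneg | hxpos
    · exact absurd (le_trans hxneg.le ENNReal.toReal_nonneg) (not_le.2 hx1)
    obtain ⟨c', hc'1, hc'2⟩ := exists_between hx2
    have hc'pos : 0 < c' := lt_of_le_of_lt hxpos hc'1
    have hcobdd : IsCoboundedUnder (· ≤ ·) atTop (fun n => S n ^ 2 / D n) :=
      (isBoundedUnder_of (r := (· ≥ ·)) ⟨0, fun n =>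
        div_nonneg (sq_nonneg _) (hDnonneg n)⟩).isCoboundedUnder_flip
    have hfreq : ∃ᶠ n in atTop, c' < S n ^ 2 / D n :=
      frequently_lt_of_lt_limsup hcobdd (hlimsup ▸ hc'2)
    have hratio : Tendsto (fun n => (1 - S m / S n) ^ 2) atTop (nhds 1) := by
      have h0 : Tendsto (fun n => S m / S n) atTop (nhds 0) :=
        tendsto_const_nhds.div_atTop hStop
      have := (((tendsto_const_nhds (x := (1:ℝ))).sub h0).pow 2)
      simpa using this
    have hxc' : x / c' < 1 := (div_lt_one hc'pos).2 hc'1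
    have hev : ∀ᶠ n in atTop, m ≤ n ∧ x / c' < (1 - S m / S n) ^ 2 :=
      (eventually_ge_atTop m).and (hratio.eventually_const_lt hxc')
    obtain ⟨n, hn1, hn2, hn3⟩ := (hfreq.and_eventually hev).exists
    -- D n > 0 and S n ≠ 0
    have hDpos : 0 < D n := by
      rcases (hDnonneg n).lt_or_eq with h | h
      · exact h
      · exfalso; rw [← h] at hn1; simp at hn1; exact absurd hn1 (not_lt.2 hc'pos.le)
    have hSne : S n ≠ 0 := by
      intro h
      rw [h] at hn1; simp at hn1; exact absurd hn1 (not_lt.2 hc'pos.le)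
    have hxle : x ≤ (μ (U m)).toReal := by
      have h1 : x = c' * (x / c') := by field_simp
      have h2 : c' * (x / c') ≤ (S n ^ 2 / D n) * (1 - S m / S n) ^ 2 :=
        mul_le_mul hn1.le hn3.le (div_nonneg hxpos hc'pos.le)
          (div_nonneg (sq_nonneg _) (hDnonneg n))
      have h3 : (S n ^ 2 / D n) * (1 - S m / S n) ^ 2 = (S n - S m) ^ 2 / D n := by
        field_simp
      have h4 : (S n - S m) ^ 2 / D n ≤ (μ (U m)).toReal :=
        (div_le_iff₀ hDpos).2 (by rw [mul_comm]; exact key m n hn2)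
      rw [h1]
      exact h2.trans (h3 ▸ h4)
    exact absurd hxle (not_le.2 hx1)
  -- pass to the limit
  have hUnm : ∀ m, NullMeasurableSet (U m) μ := fun m =>
    (MeasurableSet.iUnion fun t => MeasurableSet.iUnion fun _ => hA t).nullMeasurableSet
  have hUanti : Antitone U := by
    intro a b hab
    simp only [hUdef]
    exact Set.iUnion₂_subset fun t ht => Set.subset_iUnion₂ (s := fun i _ => A i) t (hab.trans ht)
  have htend : Tendsto (fun m => μ (U m)) atTop (nhds (μ (⋂ m, U m))) :=
    tendsto_measure_iInter_atTop hUnm hUanti ⟨0, measure_ne_top μ _⟩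
  have hlimset : Filter.limsup A atTop = ⋂ m, U m := by
    rw [limsup_eq_iInf_iSup_of_nat]
    rfl
  have htendR : Tendsto (fun m => (μ (U m)).toReal) atTop
      (nhds ((μ (Filter.limsup A atTop)).toReal)) := by
    rw [hlimset]
    exact (ENNReal.tendsto_toReal (measure_ne_top μ _)).comp htend
  exact ge_of_tendsto htendR (Filter.Eventually.of_forall hmain)
end
end

section
/- Let {Y_t; t ≥ 1} be nonnegative random variables (with values in [0,∞]) satisfying P({Y_r > x} ∩ {Y_t > x}) ≤ P(Y_r > x) P(Y_{t-r} > x) for all 1 ≤ r < t and all x > 0. If ∑_{t=1}^∞ P(Y_t > x) = ∞ for some x > 0, then P(Y_t > x infinitely often) ≥ 1/2. -/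
open MeasureTheory ProbabilityTheory Filter
open scoped ENNReal NNReal

noncomputable section

open scoped Topology


lemma KS_cauchy_schwarz {Ω : Type*} [MeasurableSpace Ω] (μ : Measure Ω)
    (A : ℕ → Set Ω) (hA : ∀ t, MeasurableSet (A t)) (J : Finset ℕ) :
    (∑ t ∈ J, μ (A t)) ^ 2 ≤
      (∑ r ∈ J, ∑ t ∈ J, μ (A r ∩ A t)) * μ (⋃ t ∈ J, A t) := by
  classical
  set f : Ω → ℝ≥0∞ := fun ω => ∑ t ∈ J, (A t).indicator 1 ω with hf
  set U : Set Ω := ⋃ t ∈ J, A t with hU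
  have hfm : Measurable f := by
    apply Finset.measurable_sum
    exact fun t _ => measurable_one.indicator (hA t)
  have hUm : MeasurableSet U := MeasurableSet.biUnion J.countable_toSet fun t _ => hA t
  have h1 : ∫⁻ ω, f ω ∂μ = ∑ t ∈ J, μ (A t) := by
    rw [hf, lintegral_finset_sum _ fun t _ => measurable_one.indicator (hA t)]
    exact Finset.sum_congr rfl fun t _ => lintegral_indicator_one (hA t)
  have h2 : ∫⁻ ω, f ω * f ω ∂μ = ∑ r ∈ J, ∑ t ∈ J, μ (A r ∩ A t) := by
    have hpt : ∀ ω, f ω * f ω = ∑ r ∈ J, ∑ t ∈ J, (A r ∩ A t).indicator 1 ω := by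
      intro ω
      rw [hf, Finset.sum_mul_sum]
      refine Finset.sum_congr rfl fun r _ => Finset.sum_congr rfl fun t _ => ?_
      rw [Set.inter_indicator_one]; rfl
    simp only [hpt]
    rw [lintegral_finset_sum _ fun r _ => Finset.measurable_sum _
      fun t _ => measurable_one.indicator ((hA r).inter (hA t))]
    refine Finset.sum_congr rfl fun r _ => ?_
    rw [lintegral_finset_sum _ fun t _ => measurable_one.indicator ((hA r).inter (hA t))]
    exact Finset.sum_congr rfl fun t _ => lintegral_indicator_one ((hA r).inter (hA t))
  have h3 : ∀ ω, f ω ≤ f ω * U.indicator 1 ω := by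
    intro ω
    by_cases hω : ω ∈ U
    · rw [Set.indicator_of_mem hω, Pi.one_apply, mul_one]
    · have : f ω = 0 := by
        apply Finset.sum_eq_zero
        intro t ht
        exact Set.indicator_of_notMem (fun h => hω (Set.mem_biUnion ht h)) 1
      simp [this]
  have hpq : Real.HolderConjugate 2 2 := Real.HolderConjugate.two_two
  have hold := ENNReal.lintegral_mul_le_Lp_mul_Lq μ hpq hfm.aemeasurable
    ((measurable_one.indicator hUm).aemeasurable)
  have hg2 : ∀ ω, (U.indicator (1 : Ω → ℝ≥0∞) ω) ^ (2 : ℝ) = U.indicator 1 ω := by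
    intro ω
    by_cases hω : ω ∈ U <;> simp [hω, ENNReal.zero_rpow_of_pos]
  have hf2 : ∀ ω, (f ω) ^ (2 : ℝ) = f ω * f ω := fun ω => by
    rw [show (2:ℝ) = ((2:ℕ):ℝ) by norm_num, ENNReal.rpow_natCast, sq]
  have key : ∫⁻ ω, f ω ∂μ ≤
      (∑ r ∈ J, ∑ t ∈ J, μ (A r ∩ A t)) ^ ((1:ℝ)/2) * (μ U) ^ ((1:ℝ)/2) := by
    calc ∫⁻ ω, f ω ∂μ ≤ ∫⁻ ω, f ω * U.indicator 1 ω ∂μ := lintegral_mono h3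
      _ ≤ (∫⁻ ω, (f ω) ^ (2:ℝ) ∂μ) ^ ((1:ℝ)/2) *
          (∫⁻ ω, (U.indicator (1 : Ω → ℝ≥0∞) ω) ^ (2:ℝ) ∂μ) ^ ((1:ℝ)/2) := hold
      _ = _ := by
          simp only [hg2, hf2]
          rw [h2, lintegral_indicator_one hUm]
  calc (∑ t ∈ J, μ (A t)) ^ 2 = (∫⁻ ω, f ω ∂μ) ^ 2 := by rw [h1]
    _ ≤ ((∑ r ∈ J, ∑ t ∈ J, μ (A r ∩ A t)) ^ ((1:ℝ)/2) * (μ U) ^ ((1:ℝ)/2)) ^ 2 :=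
        pow_le_pow_left₀ (zero_le (a := _)) key 2
    _ = _ := by
        rw [mul_pow, ← ENNReal.rpow_natCast (_ ^ ((1:ℝ)/2)) 2,
          ← ENNReal.rpow_natCast ((μ _) ^ ((1:ℝ)/2)) 2,
          ← ENNReal.rpow_mul, ← ENNReal.rpow_mul]
        norm_num

lemma KS_second_moment {Ω : Type*} [MeasurableSpace Ω] (μ : Measure Ω)
    (A : ℕ → Set Ω)
    (hsub' : ∀ r t : ℕ, 1 ≤ r → r < t →
      (μ (A r ∩ A t)).toReal ≤ (μ (A r)).toReal * (μ (A (t - r))).toReal)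
    (n : ℕ) :
    ∑ r ∈ Finset.Ioc 0 n, ∑ t ∈ Finset.Ioc 0 n, (μ (A r ∩ A t)).toReal ≤
      (∑ t ∈ Finset.Ioc 0 n, (μ (A t)).toReal) +
        2 * (∑ t ∈ Finset.Ioc 0 n, (μ (A t)).toReal) ^ 2 := by
  classical
  set p : ℕ → ℝ := fun t => (μ (A t)).toReal with hp
  set S : ℝ := ∑ t ∈ Finset.Ioc 0 n, p t with hS
  have hp0 : ∀ t, 0 ≤ p t := fun t => ENNReal.toReal_nonneg
  have hshift : ∀ r, 1 ≤ r → r ≤ n → ∑ t ∈ Finset.Ioc r n, p (t - r) ≤ S := by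
    intro r hr1 hrn
    have hmap : Finset.Ioc r n = (Finset.Ioc 0 (n - r)).map (addLeftEmbedding r) := by
      rw [Finset.map_add_left_Ioc]
      congr 1 <;> omega
    rw [hmap, Finset.sum_map]
    have heq : ∀ s ∈ Finset.Ioc 0 (n - r), p (addLeftEmbedding r s - r) = p s := by
      intro s _
      congr 1
      simp only [addLeftEmbedding_apply]
      omega
    rw [Finset.sum_congr rfl heq]
    exact Finset.sum_le_sum_of_subset_of_nonneg
      (Finset.Ioc_subset_Ioc le_rfl (Nat.sub_le n r)) (fun t _ _ => hp0 t)
  have hupper : ∀ r ∈ Finset.Ioc 0 n,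
      ∑ t ∈ Finset.Ioc r n, (μ (A r ∩ A t)).toReal ≤ p r * S := by
    intro r hr
    rw [Finset.mem_Ioc] at hr
    calc ∑ t ∈ Finset.Ioc r n, (μ (A r ∩ A t)).toReal
        ≤ ∑ t ∈ Finset.Ioc r n, p r * p (t - r) := by
          refine Finset.sum_le_sum fun t ht => ?_
          rw [Finset.mem_Ioc] at ht
          exact hsub' r t hr.1 ht.1
      _ = p r * ∑ t ∈ Finset.Ioc r n, p (t - r) := by rw [Finset.mul_sum]
      _ ≤ p r * S := mul_le_mul_of_nonneg_left (hshift r hr.1 hr.2) (hp0 r)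
  have hlow : ∑ r ∈ Finset.Ioc 0 n, ∑ t ∈ Finset.Ioc 0 (r - 1), (μ (A r ∩ A t)).toReal
      ≤ S * S := by
    have hcomm : (∑ r ∈ Finset.Ioc 0 n, ∑ t ∈ Finset.Ioc 0 (r - 1), (μ (A r ∩ A t)).toReal)
        = ∑ t ∈ Finset.Ioc 0 n, ∑ r ∈ Finset.Ioc t n, (μ (A r ∩ A t)).toReal := by
      refine Finset.sum_comm' ?_
      intro r t
      simp only [Finset.mem_Ioc]
      omega
    rw [hcomm]
    calc ∑ t ∈ Finset.Ioc 0 n, ∑ r ∈ Finset.Ioc t n, (μ (A r ∩ A t)).toReal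
        ≤ ∑ t ∈ Finset.Ioc 0 n, p t * S := by
          refine Finset.sum_le_sum fun t ht => ?_
          rw [Finset.mem_Ioc] at ht
          calc ∑ r ∈ Finset.Ioc t n, (μ (A r ∩ A t)).toReal
              ≤ ∑ r ∈ Finset.Ioc t n, p t * p (r - t) := by
                refine Finset.sum_le_sum fun r hr => ?_
                rw [Finset.mem_Ioc] at hr
                rw [Set.inter_comm]
                exact hsub' t r ht.1 hr.1
            _ = p t * ∑ r ∈ Finset.Ioc t n, p (r - t) := by rw [Finset.mul_sum]
            _ ≤ p t * S := mul_le_mul_of_nonneg_left (hshift t ht.1 ht.2) (hp0 t)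
      _ = S * S := by rw [← Finset.sum_mul]
  have hsplit : ∀ r ∈ Finset.Ioc 0 n, ∑ t ∈ Finset.Ioc 0 n, (μ (A r ∩ A t)).toReal
      = (∑ t ∈ Finset.Ioc 0 (r - 1), (μ (A r ∩ A t)).toReal) + p r
        + ∑ t ∈ Finset.Ioc r n, (μ (A r ∩ A t)).toReal := by
    intro r hr
    rw [Finset.mem_Ioc] at hr
    rw [← Finset.sum_Ioc_consecutive _ (Nat.zero_le r) hr.2]
    congr 1
    have h := Finset.sum_Ioc_succ_top (Nat.zero_le (r - 1))
      (fun t => (μ (A r ∩ A t)).toReal)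
    rw [show r - 1 + 1 = r from by omega] at h
    rw [h, Set.inter_self]
  calc ∑ r ∈ Finset.Ioc 0 n, ∑ t ∈ Finset.Ioc 0 n, (μ (A r ∩ A t)).toReal
      = ∑ r ∈ Finset.Ioc 0 n, ((∑ t ∈ Finset.Ioc 0 (r - 1), (μ (A r ∩ A t)).toReal) + p r
          + ∑ t ∈ Finset.Ioc r n, (μ (A r ∩ A t)).toReal) := Finset.sum_congr rfl hsplit
    _ = (∑ r ∈ Finset.Ioc 0 n, ∑ t ∈ Finset.Ioc 0 (r - 1), (μ (A r ∩ A t)).toReal) + S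
        + ∑ r ∈ Finset.Ioc 0 n, ∑ t ∈ Finset.Ioc r n, (μ (A r ∩ A t)).toReal := by
        rw [Finset.sum_add_distrib, Finset.sum_add_distrib]
    _ ≤ S * S + S + S * S := by
        refine add_le_add (add_le_add hlow le_rfl) ?_
        calc ∑ r ∈ Finset.Ioc 0 n, ∑ t ∈ Finset.Ioc r n, (μ (A r ∩ A t)).toReal
            ≤ ∑ r ∈ Finset.Ioc 0 n, p r * S := Finset.sum_le_sum hupper
          _ = S * S := by rw [← Finset.sum_mul]
    _ ≤ S + 2 * S ^ 2 := by nlinarith [sq_nonneg S]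


/-- Nonnegative (possibly infinite) random variables `Y₁, Y₂, …` satisfying the
subadditivity-type bound `P(Y_r > x, Y_t > x) ≤ P(Y_r > x) P(Y_{t-r} > x)` for `1 ≤ r < t`:
if `∑ₜ P(Y_t > x) = ∞` for some `x > 0`, then `P(Y_t > x i.o.) ≥ 1/2`. -/
theorem statement3 {Ω : Type*} [MeasurableSpace Ω] (μ : Measure Ω) [IsProbabilityMeasure μ]
    (Y : ℕ → Ω → ℝ≥0∞) (hY : ∀ t, Measurable (Y t))
    (hsub : ∀ x : ℝ≥0∞, 0 < x → ∀ r t : ℕ, 1 ≤ r → r < t →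
      (μ ({ω | x < Y r ω} ∩ {ω | x < Y t ω})).toReal ≤
        (μ {ω | x < Y r ω}).toReal * (μ {ω | x < Y (t - r) ω}).toReal)
    (x : ℝ≥0∞) (hx : 0 < x)
    (hdiv : ∑' t : ℕ, μ {ω | x < Y (t + 1) ω} = ⊤) :
    1 / 2 ≤ (μ (Filter.limsup (fun t => {ω | x < Y t ω}) atTop)).toReal := by
  classical
  set A : ℕ → Set Ω := fun t => {ω | x < Y t ω} with hAdef
  have hA : ∀ t, MeasurableSet (A t) := fun t => measurableSet_lt measurable_const (hY t)
  have hsub' : ∀ r t : ℕ, 1 ≤ r → r < t →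
      (μ (A r ∩ A t)).toReal ≤ (μ (A r)).toReal * (μ (A (t - r))).toReal :=
    fun r t hr hrt => hsub x hx r t hr hrt
  set p : ℕ → ℝ := fun t => (μ (A t)).toReal with hpdef
  set S : ℕ → ℝ := fun n => ∑ t ∈ Finset.Ioc 0 n, p t with hSdef
  have hne : ∀ (s : Set Ω), μ s ≠ ⊤ := fun s => measure_ne_top μ s
  have hStoReal : ∀ n, S n = (∑ t ∈ Finset.Ioc 0 n, μ (A t)).toReal := fun n =>
    (ENNReal.toReal_sum fun t _ => hne _).symm
  -- divergence of S
  have hrange : ∀ n, ∑ t ∈ Finset.range n, μ (A (t + 1)) = ∑ t ∈ Finset.Ioc 0 n, μ (A t) := by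
    intro n
    induction n with
    | zero => simp
    | succ n ih => rw [Finset.sum_range_succ, ih, Finset.sum_Ioc_succ_top (Nat.zero_le n)]
  have htop : Tendsto (fun n => ∑ t ∈ Finset.Ioc 0 n, μ (A t)) atTop (𝓝 ⊤) := by
    have h := ENNReal.tendsto_nat_tsum (fun t => μ (A (t + 1)))
    rw [show ∑' t : ℕ, μ (A (t + 1)) = ⊤ from hdiv] at h
    simpa only [hrange] using h
  have hStop : Tendsto S atTop atTop := by
    rw [tendsto_atTop]
    intro C
    filter_upwards [htop.eventually (eventually_gt_nhds
      (show ENNReal.ofReal (max C 0) < ⊤ from ENNReal.ofReal_lt_top))] with n hn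
    have hfin : (∑ t ∈ Finset.Ioc 0 n, μ (A t)) ≠ ⊤ :=
      (ENNReal.sum_lt_top.2 fun t _ => measure_lt_top μ _).ne
    have h2 := (ENNReal.ofReal_lt_iff_lt_toReal (le_max_right C 0) hfin).1 hn
    rw [hStoReal n]
    exact le_trans (le_max_left C 0) h2.le
  -- per-k bound
  set B : ℕ → Set Ω := fun k => ⋃ i, ⋃ (_ : k ≤ i), A i with hBdef
  have hBm : ∀ k, MeasurableSet (B k) := fun k =>
    MeasurableSet.iUnion fun i => MeasurableSet.iUnion fun _ => hA i
  have hkey : ∀ k, ENNReal.ofReal (1 / 2) ≤ μ (B k) := by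
    intro k
    set m : ℝ := (μ (B k)).toReal with hm
    have hm0 : 0 ≤ m := ENNReal.toReal_nonneg
    have key : ∀ n, k ≤ n → (S n - S k) ^ 2 ≤ (S n + 2 * S n ^ 2) * m := by
      intro n hkn
      have hcs := KS_cauchy_schwarz μ A hA (Finset.Ioc k n)
      have hUB : μ (⋃ t ∈ Finset.Ioc k n, A t) ≤ μ (B k) := by
        refine measure_mono (Set.iUnion₂_subset fun t ht => ?_)
        rw [Finset.mem_Ioc] at ht
        exact Set.subset_iUnion₂ (s := fun i _ => A i) t ht.1.le
      have hcs2 : (∑ t ∈ Finset.Ioc k n, μ (A t)) ^ 2 ≤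
          (∑ r ∈ Finset.Ioc k n, ∑ t ∈ Finset.Ioc k n, μ (A r ∩ A t)) * μ (B k) :=
        le_trans hcs (mul_le_mul_right hUB _)
      have hbne : (∑ r ∈ Finset.Ioc k n, ∑ t ∈ Finset.Ioc k n, μ (A r ∩ A t)) ≠ ⊤ :=
        (ENNReal.sum_lt_top.2 fun r _ =>
          ENNReal.sum_lt_top.2 fun t _ => measure_lt_top μ _).ne
      have hR := ENNReal.toReal_mono (ENNReal.mul_ne_top hbne (hne _)) hcs2
      rw [ENNReal.toReal_pow, ENNReal.toReal_mul] at hR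
      have ha : (∑ t ∈ Finset.Ioc k n, μ (A t)).toReal = S n - S k := by
        rw [ENNReal.toReal_sum fun t _ => hne _]
        have hc := Finset.sum_Ioc_consecutive (fun t => p t) (Nat.zero_le k) hkn
        simp only [hSdef]
        linarith [hc]
      have hbr : (∑ r ∈ Finset.Ioc k n, ∑ t ∈ Finset.Ioc k n, μ (A r ∩ A t)).toReal
          ≤ S n + 2 * S n ^ 2 := by
        rw [ENNReal.toReal_sum fun r _ =>
          (ENNReal.sum_lt_top.2 fun t _ => measure_lt_top μ _).ne]
        rw [Finset.sum_congr rfl fun r _ =>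
          (ENNReal.toReal_sum fun t _ => hne _ :
            (∑ t ∈ Finset.Ioc k n, μ (A r ∩ A t)).toReal = _)]
        refine le_trans ?_ (KS_second_moment μ A hsub' n)
        have hsubI : Finset.Ioc k n ⊆ Finset.Ioc 0 n :=
          Finset.Ioc_subset_Ioc (Nat.zero_le k) le_rfl
        refine le_trans (Finset.sum_le_sum fun r _ =>
          Finset.sum_le_sum_of_subset_of_nonneg hsubI
            fun t _ _ => ENNReal.toReal_nonneg) ?_
        exact Finset.sum_le_sum_of_subset_of_nonneg hsubI fun r _ _ =>
          Finset.sum_nonneg fun t _ => ENNReal.toReal_nonneg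
      calc (S n - S k) ^ 2 = ((∑ t ∈ Finset.Ioc k n, μ (A t)).toReal) ^ 2 := by rw [ha]
        _ ≤ _ := hR
        _ ≤ (S n + 2 * S n ^ 2) * m := mul_le_mul_of_nonneg_right hbr hm0
    have hev : ∀ᶠ n in atTop, ((S n - S k) / S n) ^ 2 ≤ (1 / S n + 2) * m := by
      filter_upwards [eventually_ge_atTop k, hStop.eventually_gt_atTop 0] with n hkn hSn
      have hk := key n hkn
      rw [div_pow, show (1 / S n + 2) * m = ((S n + 2 * S n ^ 2) * m) / S n ^ 2 by
        field_simp]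
      gcongr
    have hl1 : Tendsto (fun n => ((S n - S k) / S n) ^ 2) atTop (𝓝 1) := by
      have h0 : Tendsto (fun n => (S n - S k) / S n) atTop (𝓝 1) := by
        have h1 : Tendsto (fun n => 1 - S k / S n) atTop (𝓝 (1 - 0)) :=
          tendsto_const_nhds.sub (tendsto_const_nhds.div_atTop hStop)
        rw [sub_zero] at h1
        refine h1.congr' ?_
        filter_upwards [hStop.eventually_gt_atTop 0] with n hSn
        field_simp
      simpa using h0.pow 2
    have hl2 : Tendsto (fun n => (1 / S n + 2) * m) atTop (𝓝 (2 * m)) := by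
      have h1 : Tendsto (fun n => 1 / S n + 2) atTop (𝓝 (0 + 2)) := by
        simp only [one_div]
        exact hStop.inv_tendsto_atTop.add tendsto_const_nhds
      rw [zero_add] at h1
      exact h1.mul_const m
    have h12 : (1 : ℝ) ≤ 2 * m := le_of_tendsto_of_tendsto hl1 hl2 hev
    exact ENNReal.ofReal_le_of_le_toReal (by linarith)
  have hanti : Antitone B := fun a b hab =>
    Set.iUnion₂_subset fun i hi => Set.subset_iUnion₂ (s := fun i _ => A i) i (hab.trans hi)
  have htendB := tendsto_measure_iInter_atTop
    (fun k => (hBm k).nullMeasurableSet) hanti ⟨0, hne _⟩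
  have hlim : ENNReal.ofReal (1 / 2) ≤ μ (⋂ k, B k) := ge_of_tendsto' htendB hkey
  have hfinal : Filter.limsup A atTop = ⋂ k, B k := by
    rw [limsup_eq_iInf_iSup_of_nat]
    rfl
  rw [hfinal]
  have hmono := ENNReal.toReal_mono (hne _) hlim
  rwa [ENNReal.toReal_ofReal (by norm_num)] at hmono
end
end

section
/- Let {(M_t, Z_t); t ≥ 1} be i.i.d. in R^{d×d} × R^d with ‖M_1 ⋯ M_t‖ → 0 a.s. as t → ∞ (condition C0). If sup_{t ≥ 1} |(∏_{j=1}^{t-1} M_j) Z_t| < ∞ almost surely, then (∏_{j=1}^{t-1} M_j) Z_t → 0 almost surely as t → ∞. -/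
open MeasureTheory ProbabilityTheory Filter

noncomputable section

namespace Statement6Aux

instance {m n : Type*} [Countable m] [Countable n] : BorelSpace (Matrix m n ℝ) :=
  inferInstanceAs (BorelSpace (m → n → ℝ))

instance {m n : Type*} [Countable m] [Countable n] :
    SecondCountableTopology (Matrix m n ℝ) :=
  inferInstanceAs (SecondCountableTopology (m → n → ℝ))

variable {d : ℕ}

def clmL : Matrix (Fin d) (Fin d) ℝ →ₗ[ℝ]
    (EuclideanSpace ℝ (Fin d) →L[ℝ] EuclideanSpace ℝ (Fin d)) where
  toFun := Matrix.toEuclideanCLM (𝕜 := ℝ)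
  map_add' := map_add _
  map_smul' := map_smul _

lemma continuous_clmL : Continuous (clmL (d := d)) :=
  clmL.continuous_of_finiteDimensional

lemma continuous_app : Continuous
    (fun p : Matrix (Fin d) (Fin d) ℝ × EuclideanSpace ℝ (Fin d) => app p.1 p.2) := by
  have : (fun p : Matrix (Fin d) (Fin d) ℝ × EuclideanSpace ℝ (Fin d) => app p.1 p.2)
      = fun p => (clmL p.1) p.2 := rfl
  rw [this]
  exact isBoundedBilinearMap_apply.continuous.comp (continuous_clmL.prodMap continuous_id)

lemma continuous_sNorm : Continuous (sNorm (d := d)) :=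
  continuous_norm.comp continuous_clmL

lemma measurable_app_comp {α : Type*} [MeasurableSpace α]
    {f : α → Matrix (Fin d) (Fin d) ℝ} {g : α → EuclideanSpace ℝ (Fin d)}
    (hf : Measurable f) (hg : Measurable g) :
    Measurable (fun a => app (f a) (g a)) := by
  have h := (continuous_app (d := d)).measurable.comp (hf.prodMk hg)
  exact h

lemma measurable_sNorm_comp {α : Type*} [MeasurableSpace α]
    {f : α → Matrix (Fin d) (Fin d) ℝ} (hf : Measurable f) :
    Measurable (fun a => sNorm (f a)) := by
  have h := (continuous_sNorm (d := d)).measurable.comp hf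
  exact h

lemma norm_app_le (A : Matrix (Fin d) (Fin d) ℝ) (v : EuclideanSpace ℝ (Fin d)) :
    ‖app A v‖ ≤ sNorm A * ‖v‖ :=
  (Matrix.toEuclideanCLM (𝕜 := ℝ) A).le_opNorm v

lemma app_mul (A B : Matrix (Fin d) (Fin d) ℝ) (v : EuclideanSpace ℝ (Fin d)) :
    app (A * B) v = app A (app B v) := by
  simp [app, map_mul]

lemma sNorm_nonneg (A : Matrix (Fin d) (Fin d) ℝ) : 0 ≤ sNorm A := norm_nonneg _

lemma measurable_matMul :
    Measurable (fun p : Matrix (Fin d) (Fin d) ℝ × Matrix (Fin d) (Fin d) ℝ => p.1 * p.2) := by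
  apply measurable_pi_lambda
  intro i
  apply measurable_pi_lambda
  intro j
  have : (fun p : Matrix (Fin d) (Fin d) ℝ × Matrix (Fin d) (Fin d) ℝ => (p.1 * p.2) i j)
      = fun p => ∑ k, p.1 i k * p.2 k j := by
    funext p; simp [Matrix.mul_apply]
  rw [this]
  exact Finset.measurable_sum _ fun k _ =>
    ((Measurable.mul (f := fun p : Matrix (Fin d) (Fin d) ℝ × Matrix (Fin d) (Fin d) ℝ => p.1 i k)
      (g := fun p => p.2 k j) (measurable_pi_apply k |>.comp ((measurable_pi_apply i).comp measurable_fst))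
      ((measurable_pi_apply j).comp ((measurable_pi_apply k).comp measurable_snd))))

lemma measurable_listProd {α : Type*} [MeasurableSpace α] (g : ℕ → α → Matrix (Fin d) (Fin d) ℝ)
    (hg : ∀ j, Measurable (g j)) (m : ℕ) :
    Measurable (fun a => ((List.range m).map (fun j => g j a)).prod) := by
  induction m with
  | zero => simp only [List.range_zero, List.map_nil, List.prod_nil]; exact measurable_const
  | succ m ih =>
    have : (fun a => ((List.range (m+1)).map (fun j => g j a)).prod)
        = fun a => ((List.range m).map (fun j => g j a)).prod * g m a := by
      funext a; simp [List.range_succ]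
    rw [this]
    exact measurable_matMul.comp (ih.prodMk (hg m))

lemma prodTo_add {Ω : Type*} (M : ℕ → Ω → Matrix (Fin d) (Fin d) ℝ) (k m : ℕ) (ω : Ω) :
    prodTo M (k + m) ω
      = prodTo M k ω * ((List.range m).map (fun j => M (k + j) ω)).prod := by
  unfold prodTo
  rw [List.range_add, List.map_append, List.prod_append, List.map_map]
  rfl

section IID
variable {Ω β : Type*} [MeasurableSpace Ω] [MeasurableSpace β]
  {μ : Measure Ω} [IsProbabilityMeasure μ] {W : ℕ → Ω → β}

lemma map_shift_eq_pi (hW : ∀ t, Measurable (W t))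
    (hind : iIndepFun W μ)
    (hid : ∀ t, IdentDistrib (W t) (W 0) μ μ) (k n : ℕ) :
    μ.map (fun ω (i : Fin n) => W (k + i) ω)
      = Measure.pi (fun _ : Fin n => μ.map (W 0)) := by
  have hprob : IsProbabilityMeasure (μ.map (W 0)) :=
    Measure.isProbabilityMeasure_map (hW 0).aemeasurable
  have hV : Measurable (fun ω (i : Fin n) => W (k + i) ω) :=
    measurable_pi_lambda _ fun i => hW (k + i)
  refine (Measure.pi_eq fun s hs => ?_).symm
  rw [Measure.map_apply hV (MeasurableSet.univ_pi hs)]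
  have hpre : (fun ω (i : Fin n) => W (k + i) ω) ⁻¹' Set.pi Set.univ s
      = ⋂ i : Fin n, W (k + i) ⁻¹' s i := by
    ext x; simp [Set.mem_pi]
  rw [hpre]
  set sets : ℕ → Set β := fun j => ⋂ i : Fin n, ⋂ (_ : k + (i : ℕ) = j), s i with hsets
  have hsets_eq : ∀ i : Fin n, sets (k + i) = s i := by
    intro i
    ext x
    simp only [hsets, Set.mem_iInter]
    constructor
    · intro h; exact h i rfl
    · intro hx i' h
      have : i' = i := Fin.ext (by omega)
      rwa [this]
  have hsets_meas : ∀ j, MeasurableSet (sets j) := fun j =>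
    MeasurableSet.iInter fun i => MeasurableSet.iInter fun _ => hs i
  have hinj : ∀ x ∈ (Finset.univ : Finset (Fin n)), ∀ y ∈ (Finset.univ : Finset (Fin n)),
      k + (x : ℕ) = k + (y : ℕ) → x = y := fun x _ y _ h => Fin.ext (by omega)
  have key := hind.measure_inter_preimage_eq_mul
    (S := Finset.image (fun i : Fin n => k + (i : ℕ)) Finset.univ)
    (sets := sets) (fun j _ => hsets_meas j)
  have hIcap : (⋂ j ∈ Finset.image (fun i : Fin n => k + (i : ℕ)) Finset.univ,
      W j ⁻¹' sets j) = ⋂ i : Fin n, W (k + i) ⁻¹' s i := by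
    ext x
    simp only [Set.mem_iInter, Finset.mem_image, Finset.mem_univ, true_and]
    constructor
    · intro h i
      have := h (k + i) ⟨i, rfl⟩
      rwa [hsets_eq i] at this
    · rintro h j ⟨i, rfl⟩
      rw [hsets_eq i]; exact h i
  rw [hIcap] at key
  rw [key, Finset.prod_image hinj]
  refine Finset.prod_congr rfl fun i _ => ?_
  rw [hsets_eq i, ← Measure.map_apply (hW (k + i)) (hs i), (hid (k + i)).map_eq]

lemma shift_measure_eq (hW : ∀ t, Measurable (W t))
    (hind : iIndepFun W μ)
    (hid : ∀ t, IdentDistrib (W t) (W 0) μ μ) (k n : ℕ)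
    {s : Set (Fin n → β)} (hs : MeasurableSet s) :
    μ ((fun ω (i : Fin n) => W (k + i) ω) ⁻¹' s)
      = μ ((fun ω (i : Fin n) => W (i : ℕ) ω) ⁻¹' s) := by
  have h1 := map_shift_eq_pi hW hind hid k n
  have h2 := map_shift_eq_pi hW hind hid 0 n
  simp only [Nat.zero_add] at h2
  have m1 : Measurable (fun ω (i : Fin n) => W (k + (i : ℕ)) ω) :=
    measurable_pi_lambda _ fun i => hW (k + i)
  have m2 : Measurable (fun ω (i : Fin n) => W (i : ℕ) ω) :=
    measurable_pi_lambda _ fun i => hW (i : ℕ)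
  rw [← Measure.map_apply m1 hs, ← Measure.map_apply m2 hs, h1, h2]
end IID

/-- The "path set" of trajectories whose partial norms up to time `n-1` are at most `A`. -/
def pathSet (d n : ℕ) (A : ℝ) :
    Set (Fin n → (Matrix (Fin d) (Fin d) ℝ × EuclideanSpace ℝ (Fin d))) :=
  {v | ∀ t : Fin n,
    ‖app (((List.range (t : ℕ)).map
        (fun j => if h : j < n then (v ⟨j, h⟩).1 else 0)).prod) ((v t).2)‖ ≤ A}

lemma measurableSet_pathSet (n : ℕ) (A : ℝ) : MeasurableSet (pathSet d n A) := by
  have : pathSet d n A = ⋂ t : Fin n,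
      {v : Fin n → (Matrix (Fin d) (Fin d) ℝ × EuclideanSpace ℝ (Fin d)) |
        ‖app (((List.range (t : ℕ)).map
          (fun j => if h : j < n then (v ⟨j, h⟩).1 else 0)).prod) ((v t).2)‖ ≤ A} := by
    ext v; simp [pathSet, Set.mem_iInter]
  rw [this]
  refine MeasurableSet.iInter fun t => ?_
  have hprod : Measurable (fun v : Fin n → (Matrix (Fin d) (Fin d) ℝ × EuclideanSpace ℝ (Fin d)) =>
      ((List.range (t : ℕ)).map (fun j => if h : j < n then (v ⟨j, h⟩).1 else 0)).prod) := by
    refine measurable_listProd _ (fun j => ?_) _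
    by_cases h : j < n
    · simp only [dif_pos h]
      exact (measurable_pi_apply (⟨j, h⟩ : Fin n)).fst
    · simp only [dif_neg h]; exact measurable_const
  have hsnd : Measurable (fun v : Fin n → (Matrix (Fin d) (Fin d) ℝ × EuclideanSpace ℝ (Fin d)) =>
      (v t).2) := (measurable_pi_apply t).snd
  exact measurableSet_le (measurable_app_comp hprod hsnd).norm measurable_const

lemma pathSet_preimage {Ω : Type*} (W' : ℕ → Ω → (Matrix (Fin d) (Fin d) ℝ × EuclideanSpace ℝ (Fin d)))
    (n : ℕ) (A : ℝ) :
    (fun ω (i : Fin n) => W' (i : ℕ) ω) ⁻¹' pathSet d n A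
      = {ω | ∀ t, t < n →
          ‖app (((List.range t).map (fun j => (W' j ω).1)).prod) ((W' t ω).2)‖ ≤ A} := by
  ext ω
  simp only [Set.mem_preimage, pathSet, Set.mem_setOf_eq]
  constructor
  · intro h t ht
    have := h ⟨t, ht⟩
    have hml : ((List.range t).map
        (fun j => if h' : j < n then ((fun i : Fin n => W' (i : ℕ) ω) ⟨j, h'⟩).1 else 0)).prod
        = ((List.range t).map (fun j => (W' j ω).1)).prod := by
      congr 1
      refine List.map_congr_left fun j hj => ?_
      rw [List.mem_range] at hj
      rw [dif_pos (hj.trans ht)]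
    rw [hml] at this
    exact this
  · intro h t
    have hml : ((List.range (t : ℕ)).map
        (fun j => if h' : j < n then ((fun i : Fin n => W' (i : ℕ) ω) ⟨j, h'⟩).1 else 0)).prod
        = ((List.range (t : ℕ)).map (fun j => (W' j ω).1)).prod := by
      congr 1
      refine List.map_congr_left fun j hj => ?_
      rw [List.mem_range] at hj
      rw [dif_pos (hj.trans t.isLt)]
    rw [hml]
    exact h t t.isLt

end Statement6Aux

open Statement6Aux

set_option maxHeartbeats 1000000 in
/-- Under C0, condition (v) implies (iv): if `sup_t |(M₁⋯M_{t-1}) Z_t| < ∞` a.s.,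
then `(M₁⋯M_{t-1}) Z_t → 0` a.s. -/
theorem statement6 {d : ℕ} {Ω : Type*} [MeasurableSpace Ω] (μ : Measure Ω)
    [IsProbabilityMeasure μ]
    (M : ℕ → Ω → Matrix (Fin d) (Fin d) ℝ) (Z : ℕ → Ω → EuclideanSpace ℝ (Fin d))
    (hM : ∀ t, Measurable (M t)) (hZ : ∀ t, Measurable (Z t))
    (hiid : IsIIDSeq μ (fun t ω => (M t ω, Z t ω)))
    (hC0 : ∀ᵐ ω ∂μ, Tendsto (fun t => sNorm (prodTo M t ω)) atTop (nhds 0))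
    (hsup : ∀ᵐ ω ∂μ, ∃ C : ℝ, ∀ t, ‖app (prodTo M t ω) (Z t ω)‖ ≤ C) :
    ∀ᵐ ω ∂μ, Tendsto (fun t => app (prodTo M t ω) (Z t ω)) atTop (nhds 0) := by
  classical
  obtain ⟨hind, hid⟩ := hiid
  set W : ℕ → Ω → (Matrix (Fin d) (Fin d) ℝ × EuclideanSpace ℝ (Fin d)) :=
    fun t ω => (M t ω, Z t ω) with hWdef
  have hW : ∀ t, Measurable (W t) := fun t => (hM t).prodMk (hZ t)
  -- basic measurability
  have measP : ∀ t, Measurable (fun ω => prodTo M t ω) := fun t =>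
    measurable_listProd M hM t
  have measQ : ∀ k t, Measurable (fun ω => ((List.range t).map (fun j => M (k + j) ω)).prod) :=
    fun k t => measurable_listProd (fun j => M (k + j)) (fun j => hM (k + j)) t
  have measY : ∀ t, Measurable (fun ω => ‖app (prodTo M t ω) (Z t ω)‖) := fun t =>
    (measurable_app_comp (measP t) (hZ t)).norm
  have measYk : ∀ k t, Measurable
      (fun ω => ‖app (((List.range t).map (fun j => M (k + j) ω)).prod) (Z (k + t) ω)‖) :=
    fun k t => (measurable_app_comp (measQ k t) (hZ (k + t))).norm
  -- the events
  set G : ℕ → Set Ω := fun A => {ω | ∀ t, ‖app (prodTo M t ω) (Z t ω)‖ ≤ (A : ℝ)} with hGdef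
  have measG : ∀ A, MeasurableSet (G A) := by
    intro A
    have : G A = ⋂ t, {ω | ‖app (prodTo M t ω) (Z t ω)‖ ≤ (A : ℝ)} := by
      ext ω; simp [hGdef, Set.mem_iInter]
    rw [this]
    exact MeasurableSet.iInter fun t => measurableSet_le (measY t) measurable_const
  set Ek : ℕ → ℕ → Set Ω := fun k A =>
    {ω | ∀ t, ‖app (((List.range t).map (fun j => M (k + j) ω)).prod) (Z (k + t) ω)‖ ≤ (A : ℝ)}
    with hEkdef
  have measEk : ∀ k A, MeasurableSet (Ek k A) := by
    intro k A
    have : Ek k A = ⋂ t,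
        {ω | ‖app (((List.range t).map (fun j => M (k + j) ω)).prod) (Z (k + t) ω)‖ ≤ (A : ℝ)} := by
      ext ω; simp [hEkdef, Set.mem_iInter]
    rw [this]
    exact MeasurableSet.iInter fun t => measurableSet_le (measYk k t) measurable_const
  -- finite-horizon identities
  have keyfin : ∀ k n A, μ {ω | ∀ t, t < n →
        ‖app (((List.range t).map (fun j => M (k + j) ω)).prod) (Z (k + t) ω)‖ ≤ (A : ℝ)}
      = μ {ω | ∀ t, t < n → ‖app (prodTo M t ω) (Z t ω)‖ ≤ (A : ℝ)} := by
    intro k n A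
    have e1 : (fun ω (i : Fin n) => W (k + (i : ℕ)) ω) ⁻¹' pathSet d n (A : ℝ)
        = {ω | ∀ t, t < n →
          ‖app (((List.range t).map (fun j => M (k + j) ω)).prod) (Z (k + t) ω)‖ ≤ (A : ℝ)} :=
      pathSet_preimage (fun j => W (k + j)) n (A : ℝ)
    have e2 : (fun ω (i : Fin n) => W (i : ℕ) ω) ⁻¹' pathSet d n (A : ℝ)
        = {ω | ∀ t, t < n → ‖app (prodTo M t ω) (Z t ω)‖ ≤ (A : ℝ)} :=
      pathSet_preimage W n (A : ℝ)
    rw [← e1, ← e2]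
    exact shift_measure_eq hW hind hid k n (measurableSet_pathSet n (A : ℝ))
  -- μ (G A) ≤ μ (Ek k A)
  have hGE : ∀ k A, μ (G A) ≤ μ (Ek k A) := by
    intro k A
    have hEkInter : Ek k A = ⋂ n, {ω | ∀ t, t < n →
        ‖app (((List.range t).map (fun j => M (k + j) ω)).prod) (Z (k + t) ω)‖ ≤ (A : ℝ)} := by
      ext ω
      simp only [hEkdef, Set.mem_setOf_eq, Set.mem_iInter]
      constructor
      · intro h n t _; exact h t
      · intro h t; exact h (t + 1) t (Nat.lt_succ_self t)
    have hmeasn : ∀ n : ℕ, MeasurableSet {ω | ∀ t, t < n →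
        ‖app (((List.range t).map (fun j => M (k + j) ω)).prod) (Z (k + t) ω)‖ ≤ (A : ℝ)} := by
      intro n
      have : {ω | ∀ t, t < n →
          ‖app (((List.range t).map (fun j => M (k + j) ω)).prod) (Z (k + t) ω)‖ ≤ (A : ℝ)}
          = ⋂ t, ⋂ (_ : t < n),
            {ω | ‖app (((List.range t).map (fun j => M (k + j) ω)).prod) (Z (k + t) ω)‖ ≤ (A : ℝ)} := by
        ext ω; simp [Set.mem_iInter]
      rw [this]
      exact MeasurableSet.iInter fun t => MeasurableSet.iInter fun _ =>
        measurableSet_le (measYk k t) measurable_const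
    have hanti : Antitone (fun n => {ω | ∀ t, t < n →
        ‖app (((List.range t).map (fun j => M (k + j) ω)).prod) (Z (k + t) ω)‖ ≤ (A : ℝ)}) := by
      intro a b hab ω hω t ht
      exact hω t (lt_of_lt_of_le ht hab)
    have htend := tendsto_measure_iInter_atTop
      (μ := μ)
      (s := fun n => {ω | ∀ t, t < n →
        ‖app (((List.range t).map (fun j => M (k + j) ω)).prod) (Z (k + t) ω)‖ ≤ (A : ℝ)})
      (fun n => (hmeasn n).nullMeasurableSet) hanti ⟨0, measure_ne_top μ _⟩
    rw [← hEkInter] at htend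
    refine ge_of_tendsto htend (Filter.Eventually.of_forall fun n => ?_)
    simp only [Function.comp_apply]
    rw [keyfin k n (A : ℝ)]
    refine measure_mono fun ω hω => ?_
    intro t _
    exact hω t
  -- the frequently-bad sets
  have hBad : ∀ ε : ℝ, 0 < ε →
      μ {ω | ∃ᶠ t in atTop, ε < ‖app (prodTo M t ω) (Z t ω)‖} = 0 := by
    intro ε hε
    set B : Set Ω := {ω | ∃ᶠ t in atTop, ε < ‖app (prodTo M t ω) (Z t ω)‖} with hBdef
    -- step 3: inclusion
    have hincl : ∀ A : ℕ, 1 ≤ A → ∀ k : ℕ,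
        B ⊆ {ω | ε / (A : ℝ) ≤ dist (sNorm (prodTo M k ω)) 0} ∪ (Ek k A)ᶜ := by
      intro A hA k ω hω
      by_contra hmem
      rw [Set.mem_union] at hmem
      push_neg at hmem
      obtain ⟨h1, h2⟩ := hmem
      rw [Set.notMem_compl_iff] at h2
      simp only [Set.mem_setOf_eq, not_le] at h1
      have hApos : (0 : ℝ) < (A : ℝ) := by exact_mod_cast hA
      have hsn : sNorm (prodTo M k ω) < ε / (A : ℝ) := by
        calc sNorm (prodTo M k ω) ≤ |sNorm (prodTo M k ω)| := le_abs_self _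
        _ = dist (sNorm (prodTo M k ω)) 0 := by rw [Real.dist_0_eq_abs]
        _ < ε / (A : ℝ) := h1
      have hev : ∀ᶠ t in atTop, ¬ (ε < ‖app (prodTo M t ω) (Z t ω)‖) := by
        rw [eventually_atTop]
        refine ⟨k, fun t hkt => ?_⟩
        obtain ⟨m, rfl⟩ := Nat.exists_eq_add_of_le hkt
        rw [not_lt, prodTo_add M k m ω, app_mul]
        calc ‖app (prodTo M k ω) (app (((List.range m).map (fun j => M (k + j) ω)).prod)
              (Z (k + m) ω))‖
            ≤ sNorm (prodTo M k ω) *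
              ‖app (((List.range m).map (fun j => M (k + j) ω)).prod) (Z (k + m) ω)‖ :=
              norm_app_le _ _
          _ ≤ sNorm (prodTo M k ω) * (A : ℝ) := by
              exact mul_le_mul_of_nonneg_left (h2 m) (sNorm_nonneg _)
          _ ≤ (ε / (A : ℝ)) * (A : ℝ) := by
              exact mul_le_mul_of_nonneg_right hsn.le (le_of_lt hApos)
          _ = ε := by field_simp
      exact (Filter.not_frequently.2 hev) hω
    -- step 4: for each A, μ B ≤ μ (G A)ᶜ
    have hstep4 : ∀ A : ℕ, 1 ≤ A → μ B ≤ μ ((G A)ᶜ) := by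
      intro A hA
      have hεA : 0 < ε / (A : ℝ) := by
        apply div_pos hε
        exact_mod_cast hA
      -- convergence in measure of sNorm (prodTo M k ·) to 0
      have htim : TendstoInMeasure μ (fun k ω => sNorm (prodTo M k ω)) atTop (fun _ => (0 : ℝ)) := by
        apply tendstoInMeasure_of_tendsto_ae
        · exact fun k => (measurable_sNorm_comp (measP k)).aestronglyMeasurable
        · exact hC0
      have hk0 := tendstoInMeasure_iff_dist.mp htim (ε / (A : ℝ)) hεA
      have hbound : ∀ k : ℕ, μ B ≤
          μ {ω | ε / (A : ℝ) ≤ dist (sNorm (prodTo M k ω)) 0} + μ ((G A)ᶜ) := by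
        intro k
        calc μ B ≤ μ ({ω | ε / (A : ℝ) ≤ dist (sNorm (prodTo M k ω)) 0} ∪ (Ek k A)ᶜ) :=
              measure_mono (hincl A hA k)
          _ ≤ μ {ω | ε / (A : ℝ) ≤ dist (sNorm (prodTo M k ω)) 0} + μ ((Ek k A)ᶜ) :=
              measure_union_le _ _
          _ ≤ μ {ω | ε / (A : ℝ) ≤ dist (sNorm (prodTo M k ω)) 0} + μ ((G A)ᶜ) := by
              refine add_le_add_right ?_ _
              rw [measure_compl (measEk k A) (measure_ne_top μ _),
                measure_compl (measG A) (measure_ne_top μ _)]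
              exact tsub_le_tsub_left (hGE k A) _
      have hlim : Tendsto (fun k => μ {ω | ε / (A : ℝ) ≤ dist (sNorm (prodTo M k ω)) 0}
          + μ ((G A)ᶜ)) atTop (nhds (0 + μ ((G A)ᶜ))) :=
        Tendsto.add hk0 tendsto_const_nhds
      rw [zero_add] at hlim
      exact ge_of_tendsto hlim (Filter.Eventually.of_forall hbound)
    -- step 5: μ (G A)ᶜ → 0
    have hGtend : Tendsto (fun A : ℕ => μ ((G A)ᶜ)) atTop (nhds (μ (⋂ A, (G A)ᶜ))) := by
      apply tendsto_measure_iInter_atTop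
      · exact fun A => (measG A).compl.nullMeasurableSet
      · intro a b hab ω hω hmem
        apply hω
        intro t
        exact le_trans (hmem t) (by exact_mod_cast hab)
      · exact ⟨0, measure_ne_top μ _⟩
    have hGnull : μ (⋂ A, (G A)ᶜ) = 0 := by
      have hae : ∀ᵐ ω ∂μ, ω ∉ ⋂ A, (G A)ᶜ := by
        filter_upwards [hsup] with ω hC
        obtain ⟨C, hC⟩ := hC
        simp only [Set.mem_iInter, Set.mem_compl_iff, not_forall, not_not]
        exact ⟨⌈C⌉₊, fun t => (hC t).trans (Nat.le_ceil C)⟩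
      exact measure_eq_zero_iff_ae_notMem.mpr hae
    rw [hGnull] at hGtend
    have hle : μ B ≤ 0 := by
      refine ge_of_tendsto hGtend ?_
      filter_upwards [eventually_ge_atTop 1] with A hA
      exact hstep4 A hA
    exact le_antisymm hle zero_le
  -- conclusion
  have hNull : μ (⋃ m : ℕ,
      {ω | ∃ᶠ t in atTop, 1 / ((m : ℝ) + 1) < ‖app (prodTo M t ω) (Z t ω)‖}) = 0 :=
    measure_iUnion_null fun m => hBad (1 / ((m : ℝ) + 1)) (by positivity)
  have hae2 := measure_eq_zero_iff_ae_notMem.mp hNull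
  filter_upwards [hae2] with ω hω
  rw [NormedAddCommGroup.tendsto_nhds_zero]
  intro ε hε
  obtain ⟨m, hm⟩ := exists_nat_one_div_lt hε
  simp only [Set.mem_iUnion, not_exists, Set.mem_setOf_eq] at hω
  have hnm := hω m
  filter_upwards [Filter.not_frequently.mp hnm] with t ht
  push_neg at ht
  exact lt_of_le_of_lt ht hm
end
end

section
/- Let {(M_t, Z_t); t ≥ 1} be i.i.d. in R^{d×d} × R^d, Z_0 independent of the sequence, and define X_0 = Z_0, X_t = M_t X_{t-1} + Z_t. If ‖M_1 ⋯ M_t‖ → 0 a.s. as t → ∞ and ∑_{i=1}^t (∏_{j=1}^{i-1} M_j) Z_i converges almost surely as t → ∞, then X_t converges in distribution as t → ∞. -/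
open MeasureTheory ProbabilityTheory Filter

noncomputable section

namespace Stmt7

variable {d : ℕ}

instance : BorelSpace (Matrix (Fin d) (Fin d) ℝ) :=
  inferInstanceAs (BorelSpace (Fin d → Fin d → ℝ))

theorem continuous_app : Continuous fun y : Matrix (Fin d) (Fin d) ℝ × EuclideanSpace ℝ (Fin d) =>
    app y.1 y.2 := by
  have h1 : Continuous fun A : Matrix (Fin d) (Fin d) ℝ =>
      (Matrix.toEuclideanCLM (𝕜 := ℝ) A : EuclideanSpace ℝ (Fin d) →L[ℝ] EuclideanSpace ℝ (Fin d)) :=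
    LinearMap.continuous_of_finiteDimensional (IsLinearMap.mk'
      (fun A => Matrix.toEuclideanCLM (𝕜 := ℝ) A) ⟨fun a b => map_add _ a b, fun c a => map_smul _ c a⟩)
  exact isBoundedBilinearMap_apply.continuous.comp (h1.comp continuous_fst |>.prodMk continuous_snd)

theorem measurable_app :
    Measurable fun y : Matrix (Fin d) (Fin d) ℝ × EuclideanSpace ℝ (Fin d) => app y.1 y.2 :=
  continuous_app.measurable

theorem app_one (v : EuclideanSpace ℝ (Fin d)) : app (1 : Matrix (Fin d) (Fin d) ℝ) v = v := by
  simp [app]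

theorem app_mul (A B : Matrix (Fin d) (Fin d) ℝ) (v : EuclideanSpace ℝ (Fin d)) :
    app (A * B) v = app A (app B v) := by
  simp [app]

theorem app_add (A : Matrix (Fin d) (Fin d) ℝ) (u v : EuclideanSpace ℝ (Fin d)) :
    app A (u + v) = app A u + app A v := by
  simp [app]

theorem norm_app_le (A : Matrix (Fin d) (Fin d) ℝ) (v : EuclideanSpace ℝ (Fin d)) :
    ‖app A v‖ ≤ sNorm A * ‖v‖ :=
  (Matrix.toEuclideanCLM (𝕜 := ℝ) A).le_opNorm v

variable {Ω : Type*} [MeasurableSpace Ω]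

theorem measurable_matrixMul {f g : Ω → Matrix (Fin d) (Fin d) ℝ}
    (hf : Measurable f) (hg : Measurable g) : Measurable (fun ω => f ω * g ω) := by
  apply measurable_pi_lambda
  intro i
  apply measurable_pi_lambda
  intro j
  have : (fun ω => (f ω * g ω) i j) = fun ω => ∑ k, f ω i k * g ω k j := by
    funext ω; simp [Matrix.mul_apply]
  rw [show (fun ω => (f ω * g ω) i j) = fun ω => ∑ k, f ω i k * g ω k j from by
    funext ω; simp [Matrix.mul_apply]]
  exact Finset.measurable_sum _ fun k _ =>
    ((measurable_pi_apply k).comp ((measurable_pi_apply i).comp hf)).mul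
      ((measurable_pi_apply j).comp ((measurable_pi_apply k).comp hg))

theorem measurable_listProd (l : List ℕ) (F : ℕ → Ω → Matrix (Fin d) (Fin d) ℝ)
    (hF : ∀ n, Measurable (F n)) :
    Measurable fun ω => (l.map (fun j => F j ω)).prod := by
  induction l with
  | nil => simpa using measurable_const
  | cons a l ih =>
      simp only [List.map_cons, List.prod_cons]
      exact measurable_matrixMul (hF a) ih

/-- `p (b-1) * p (b-2) * ⋯ * p a` (empty product when `a ≥ b`). -/
def segR (p : ℕ → Matrix (Fin d) (Fin d) ℝ) (a b : ℕ) : Matrix (Fin d) (Fin d) ℝ :=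
  ((List.range (b - a)).map (fun j => p (b - 1 - j))).prod

theorem segR_self (p : ℕ → Matrix (Fin d) (Fin d) ℝ) (a : ℕ) : segR p a a = 1 := by
  simp [segR]

theorem segR_succ (p : ℕ → Matrix (Fin d) (Fin d) ℝ) {a b : ℕ} (h : a ≤ b) :
    segR p a (b + 1) = p b * segR p a b := by
  have h1 : b + 1 - a = (b - a) + 1 := by omega
  rw [segR, h1, List.range_succ_eq_map, List.map_cons, List.map_map, List.prod_cons]
  have h2 : ((fun j => p (b + 1 - 1 - j)) ∘ Nat.succ) = fun j => p (b - 1 - j) := by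
    funext j; exact congrArg p (by omega)
  rw [h2, show b + 1 - 1 - 0 = b from by omega]
  rfl

theorem segR_congr {p p' : ℕ → Matrix (Fin d) (Fin d) ℝ} {a b : ℕ}
    (h : ∀ n < b, p n = p' n) : segR p a b = segR p' a b := by
  unfold segR
  congr 1
  apply List.map_congr_left
  intro j hj
  rw [List.mem_range] at hj
  exact h _ (by omega)

/-- reversal: if `p n = q (t-1-n)` for `n < t` then `segR p a t = q 0 * ⋯ * q (t-a-1)`. -/
theorem segR_rev {p q : ℕ → Matrix (Fin d) (Fin d) ℝ} {t : ℕ}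
    (hp : ∀ n < t, p n = q (t - 1 - n)) (a : ℕ) :
    segR p a t = ((List.range (t - a)).map q).prod := by
  unfold segR
  congr 1
  apply List.map_congr_left
  intro j hj
  rw [List.mem_range] at hj
  rw [hp (t - 1 - j) (by omega)]
  exact congrArg q (by omega)

end Stmt7

namespace Stmt7

variable {d : ℕ} {Ω : Type*} [MeasurableSpace Ω]

theorem app_sum {s : Finset ℕ} (A : Matrix (Fin d) (Fin d) ℝ)
    (f : ℕ → EuclideanSpace ℝ (Fin d)) :
    app A (∑ i ∈ s, f i) = ∑ i ∈ s, app A (f i) :=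
  map_sum (Matrix.toEuclideanCLM (𝕜 := ℝ) A) _ _

/-- The backward representation functional. -/
def G (t : ℕ) (z : EuclideanSpace ℝ (Fin d))
    (p : ℕ → Matrix (Fin d) (Fin d) ℝ × EuclideanSpace ℝ (Fin d)) : EuclideanSpace ℝ (Fin d) :=
  app (segR (fun n => (p n).1) 0 t) z +
    ∑ i ∈ Finset.range t, app (segR (fun n => (p n).1) (i + 1) t) (p i).2

theorem G_congr {t : ℕ} {z : EuclideanSpace ℝ (Fin d)}
    {p p' : ℕ → Matrix (Fin d) (Fin d) ℝ × EuclideanSpace ℝ (Fin d)}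
    (h : ∀ n < t, p n = p' n) : G t z p = G t z p' := by
  unfold G
  rw [segR_congr (fun n hn => congrArg Prod.fst (h n hn))]
  congr 1
  refine Finset.sum_congr rfl fun i hi => ?_
  rw [segR_congr (fun n hn => congrArg Prod.fst (h n hn)),
    congrArg Prod.snd (h i (Finset.mem_range.mp hi))]

theorem X_eq {M : ℕ → Ω → Matrix (Fin d) (Fin d) ℝ} {Z : ℕ → Ω → EuclideanSpace ℝ (Fin d)}
    {Z0 : Ω → EuclideanSpace ℝ (Fin d)} {X : ℕ → Ω → EuclideanSpace ℝ (Fin d)}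
    (hX0 : ∀ ω, X 0 ω = Z0 ω)
    (hXrec : ∀ t ω, X (t + 1) ω = app (M t ω) (X t ω) + Z t ω) (t : ℕ) (ω : Ω) :
    X t ω = G t (Z0 ω) (fun n => (M n ω, Z n ω)) := by
  induction t with
  | zero => simp [G, segR_self, app_one, hX0]
  | succ t ih =>
    rw [hXrec, ih]
    unfold G
    simp only
    rw [app_add, app_sum, segR_succ _ (Nat.zero_le t), app_mul, Finset.sum_range_succ,
      segR_self, app_one]
    rw [show (∑ i ∈ Finset.range t, app (M t ω)
        (app (segR (fun n => M n ω) (i + 1) t) (Z i ω)))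
        = ∑ i ∈ Finset.range t, app (segR (fun n => M n ω) (i + 1) (t + 1)) (Z i ω) from
      Finset.sum_congr rfl fun i hi => by
        rw [segR_succ _ (Nat.succ_le_of_lt (Finset.mem_range.mp hi)), app_mul]]
    rw [add_assoc]

/-- The reversed (tilde) process. -/
def Xt (M : ℕ → Ω → Matrix (Fin d) (Fin d) ℝ) (Z : ℕ → Ω → EuclideanSpace ℝ (Fin d))
    (Z0 : Ω → EuclideanSpace ℝ (Fin d)) (t : ℕ) (ω : Ω) : EuclideanSpace ℝ (Fin d) :=
  app (prodTo M t ω) (Z0 ω) + ∑ i ∈ Finset.range t, app (prodTo M i ω) (Z i ω)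

theorem Xt_eq (M : ℕ → Ω → Matrix (Fin d) (Fin d) ℝ) (Z : ℕ → Ω → EuclideanSpace ℝ (Fin d))
    (Z0 : Ω → EuclideanSpace ℝ (Fin d)) (t : ℕ) (ω : Ω) :
    Xt M Z Z0 t ω = G t (Z0 ω)
      (fun n => if h : n < t then (M (t - 1 - n) ω, Z (t - 1 - n) ω) else (1, 0)) := by
  unfold Xt G
  set p : ℕ → Matrix (Fin d) (Fin d) ℝ × EuclideanSpace ℝ (Fin d) :=
    fun n => if h : n < t then (M (t - 1 - n) ω, Z (t - 1 - n) ω) else (1, 0) with hp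
  have hq : ∀ n < t, (p n).1 = (fun j => M j ω) (t - 1 - n) := by
    intro n hn; simp only [hp, dif_pos hn]
  congr 1
  · rw [segR_rev (p := fun n => (p n).1) (q := fun j => M j ω) hq 0]
    rfl
  · rw [← Finset.sum_range_reflect (fun i => app (prodTo M i ω) (Z i ω)) t]
    refine Finset.sum_congr rfl fun i hi => ?_
    have hit : i < t := Finset.mem_range.mp hi
    rw [segR_rev (p := fun n => (p n).1) (q := fun j => M j ω) hq (i + 1)]
    have h2 : (p i).2 = Z (t - 1 - i) ω := by simp only [hp, dif_pos hit]
    rw [h2]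
    have h3 : t - (i + 1) = t - 1 - i := by omega
    rw [h3]
    rfl

theorem measurable_G (t : ℕ) :
    Measurable fun x : EuclideanSpace ℝ (Fin d) ×
      (ℕ → Matrix (Fin d) (Fin d) ℝ × EuclideanSpace ℝ (Fin d)) => G t x.1 x.2 := by
  have hseg : ∀ a b : ℕ, Measurable fun x : EuclideanSpace ℝ (Fin d) ×
      (ℕ → Matrix (Fin d) (Fin d) ℝ × EuclideanSpace ℝ (Fin d)) =>
      segR (fun n => (x.2 n).1) a b := by
    intro a b
    simp only [segR]
    exact measurable_listProd (List.range (b - a))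
      (fun j (x : EuclideanSpace ℝ (Fin d) ×
        (ℕ → Matrix (Fin d) (Fin d) ℝ × EuclideanSpace ℝ (Fin d))) => (x.2 (b - 1 - j)).1)
      (fun n => measurable_fst.comp ((measurable_pi_apply _).comp measurable_snd))
  have h1' : Measurable (fun x : EuclideanSpace ℝ (Fin d) ×
      (ℕ → Matrix (Fin d) (Fin d) ℝ × EuclideanSpace ℝ (Fin d)) =>
      ((segR (fun n => (x.2 n).1) 0 t, x.1) :
        Matrix (Fin d) (Fin d) ℝ × EuclideanSpace ℝ (Fin d))) := (hseg 0 t).prodMk measurable_fst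
  have h1 := measurable_app.comp h1'
  have h2 : Measurable (fun x : EuclideanSpace ℝ (Fin d) ×
      (ℕ → Matrix (Fin d) (Fin d) ℝ × EuclideanSpace ℝ (Fin d)) =>
      ∑ i ∈ Finset.range t, app (segR (fun n => (x.2 n).1) (i + 1) t) (x.2 i).2) := by
    refine Finset.measurable_sum _ fun i _ => ?_
    have hb : Measurable (fun x : EuclideanSpace ℝ (Fin d) ×
        (ℕ → Matrix (Fin d) (Fin d) ℝ × EuclideanSpace ℝ (Fin d)) =>
        ((segR (fun n => (x.2 n).1) (i + 1) t, (x.2 i).2) :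
          Matrix (Fin d) (Fin d) ℝ × EuclideanSpace ℝ (Fin d))) :=
      (hseg (i + 1) t).prodMk (measurable_snd.comp ((measurable_pi_apply i).comp measurable_snd))
    have := measurable_app.comp hb
    exact this
  have := h1.add h2
  exact this

theorem map_fun_eq_pi {β : Type*} [MeasurableSpace β] (μ : Measure Ω) [IsProbabilityMeasure μ]
    {W : ℕ → Ω → β} (hW : ∀ n, Measurable (W n))
    (hind : iIndepFun W μ) {t : ℕ} (e : Fin t → ℕ)
    (he : Function.Injective e) :
    μ.map (fun ω (i : Fin t) => W (e i) ω) = Measure.pi (fun i => μ.map (W (e i))) := by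
  classical
  haveI : ∀ i : Fin t, IsProbabilityMeasure (μ.map (W (e i))) :=
    fun i => Measure.isProbabilityMeasure_map (hW _).aemeasurable
  refine (Measure.pi_eq fun s hs => ?_).symm
  set sets : ℕ → Set β := fun n => if h : ∃ i, e i = n then s h.choose else Set.univ with hsets
  have key : ∀ i, sets (e i) = s i := by
    intro i
    have hex : ∃ j, e j = e i := ⟨i, rfl⟩
    simp only [hsets, dif_pos hex]
    exact congrArg s (he hex.choose_spec)
  have hmeas : ∀ n, MeasurableSet (sets n) := by
    intro n
    by_cases h : ∃ i, e i = n
    · simp only [hsets, dif_pos h]; exact hs _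
    · simp only [hsets, dif_neg h]; exact MeasurableSet.univ
  rw [Measure.map_apply (measurable_pi_lambda _ fun i => hW (e i)) (MeasurableSet.univ_pi hs)]
  have hpre : (fun ω (i : Fin t) => W (e i) ω) ⁻¹' (Set.pi Set.univ s) =
      ⋂ n ∈ Finset.image e Finset.univ, W n ⁻¹' sets n := by
    ext ω
    simp only [Set.mem_preimage, Set.mem_pi, Set.mem_univ, forall_true_left, Set.mem_iInter,
      Finset.mem_image, Finset.mem_univ, true_and]
    constructor
    · rintro h n ⟨i, rfl⟩
      rw [key i]; exact h i
    · intro h i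
      have := h (e i) ⟨i, rfl⟩
      rwa [key i] at this
  rw [hpre, hind.measure_inter_preimage_eq_mul (Finset.image e Finset.univ) (fun n _ => hmeas n),
    Finset.prod_image (fun x _ y _ hxy => he hxy)]
  refine Finset.prod_congr rfl fun i _ => ?_
  rw [key i, Measure.map_apply (hW (e i)) (hs i)]

end Stmt7

open Stmt7 in
/-- Under C0, a.s. convergence of the perpetuity series implies convergence in
distribution of the RCA(1) process. -/
theorem statement7 {d : ℕ} {Ω : Type*} [MeasurableSpace Ω] (μ : Measure Ω)
    [IsProbabilityMeasure μ]
    (M : ℕ → Ω → Matrix (Fin d) (Fin d) ℝ) (Z : ℕ → Ω → EuclideanSpace ℝ (Fin d))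
    (hM : ∀ t, Measurable (M t)) (hZ : ∀ t, Measurable (Z t))
    (hiid : IsIIDSeq μ (fun t ω => (M t ω, Z t ω)))
    (Z0 : Ω → EuclideanSpace ℝ (Fin d)) (hZ0 : Measurable Z0)
    (hindep : IndepFun Z0 (fun ω => fun t => (M t ω, Z t ω)) μ)
    (X : ℕ → Ω → EuclideanSpace ℝ (Fin d))
    (hX0 : ∀ ω, X 0 ω = Z0 ω)
    (hXrec : ∀ t ω, X (t + 1) ω = app (M t ω) (X t ω) + Z t ω)
    (hC0 : ∀ᵐ ω ∂μ, Tendsto (fun t => sNorm (prodTo M t ω)) atTop (nhds 0))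
    (hconv : ∀ᵐ ω ∂μ, ∃ L, Tendsto
      (fun t => ∑ i ∈ Finset.range t, app (prodTo M i ω) (Z i ω)) atTop (nhds L)) :
    ∃ ν : Measure (EuclideanSpace ℝ (Fin d)), IsProbabilityMeasure ν ∧
      ∀ f : BoundedContinuousFunction (EuclideanSpace ℝ (Fin d)) ℝ,
        Tendsto (fun t => ∫ ω, f (X t ω) ∂μ) atTop (nhds (∫ v, f v ∂ν)) := by
  classical
  set W : ℕ → Ω → Matrix (Fin d) (Fin d) ℝ × EuclideanSpace ℝ (Fin d) :=
    fun n ω => (M n ω, Z n ω) with hW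
  have hWm : ∀ n, Measurable (W n) := fun n => (hM n).prodMk (hZ n)
  -- measurability of prodTo and of the tilde process
  have hprodTo : ∀ n, Measurable (prodTo M n) := fun n =>
    measurable_listProd (List.range n) M hM
  have hXtmeas : ∀ t, Measurable (Xt M Z Z0 t) := by
    intro t
    have h1' : Measurable (fun ω => ((prodTo M t ω, Z0 ω) :
        Matrix (Fin d) (Fin d) ℝ × EuclideanSpace ℝ (Fin d))) := (hprodTo t).prodMk hZ0
    have h1 := measurable_app.comp h1'
    have h2 : Measurable (fun ω => ∑ i ∈ Finset.range t, app (prodTo M i ω) (Z i ω)) := by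
      refine Finset.measurable_sum _ fun i _ => ?_
      have hb' : Measurable (fun ω => ((prodTo M i ω, Z i ω) :
          Matrix (Fin d) (Fin d) ℝ × EuclideanSpace ℝ (Fin d))) := (hprodTo i).prodMk (hZ i)
      have := measurable_app.comp hb'
      exact this
    have := h1.add h2
    exact this
  -- identical distribution of X t and Xt t
  have key : ∀ t, IdentDistrib (X t) (Xt M Z Z0 t) μ μ := by
    intro t
    set e1 : Fin t → ℕ := fun i => (i : ℕ) with he1def
    set e2 : Fin t → ℕ := fun i => t - 1 - (i : ℕ) with he2def
    have he1 : Function.Injective e1 := Fin.val_injective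
    have he2 : Function.Injective e2 := by
      intro i j hij
      have hi := i.isLt; have hj := j.isLt
      exact Fin.ext (by simp only [he2def] at hij; omega)
    have hV1m : Measurable (fun ω (i : Fin t) => W (e1 i) ω) :=
      measurable_pi_lambda _ fun i => hWm _
    have hV2m : Measurable (fun ω (i : Fin t) => W (e2 i) ω) :=
      measurable_pi_lambda _ fun i => hWm _
    have hlaw : μ.map (fun ω (i : Fin t) => W (e1 i) ω)
        = μ.map (fun ω (i : Fin t) => W (e2 i) ω) := by
      rw [map_fun_eq_pi μ hWm hiid.1 e1 he1, map_fun_eq_pi μ hWm hiid.1 e2 he2]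
      congr 1
      funext i
      rw [(hiid.2 (e1 i)).map_eq, (hiid.2 (e2 i)).map_eq]
    have hproj1 : Measurable (fun h : ℕ → Matrix (Fin d) (Fin d) ℝ × EuclideanSpace ℝ (Fin d) =>
        fun i : Fin t => h (e1 i)) := measurable_pi_lambda _ fun i => measurable_pi_apply _
    have hproj2 : Measurable (fun h : ℕ → Matrix (Fin d) (Fin d) ℝ × EuclideanSpace ℝ (Fin d) =>
        fun i : Fin t => h (e2 i)) := measurable_pi_lambda _ fun i => measurable_pi_apply _
    have hind1 : IndepFun Z0 (fun ω (i : Fin t) => W (e1 i) ω) μ := by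
      have := hindep.comp measurable_id hproj1
      exact this
    have hind2 : IndepFun Z0 (fun ω (i : Fin t) => W (e2 i) ω) μ := by
      have := hindep.comp measurable_id hproj2
      exact this
    have hpairlaw : μ.map (fun ω => (Z0 ω, fun i : Fin t => W (e1 i) ω))
        = μ.map (fun ω => (Z0 ω, fun i : Fin t => W (e2 i) ω)) := by
      rw [(indepFun_iff_map_prod_eq_prod_map_map hZ0.aemeasurable hV1m.aemeasurable).mp hind1,
        (indepFun_iff_map_prod_eq_prod_map_map hZ0.aemeasurable hV2m.aemeasurable).mp hind2,
        hlaw]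
    have hpair : IdentDistrib (fun ω => (Z0 ω, fun i : Fin t => W (e1 i) ω))
        (fun ω => (Z0 ω, fun i : Fin t => W (e2 i) ω)) μ μ :=
      ⟨(hZ0.prodMk hV1m).aemeasurable, (hZ0.prodMk hV2m).aemeasurable, hpairlaw⟩
    -- the representation functional
    set Ψ : EuclideanSpace ℝ (Fin d) ×
        (Fin t → Matrix (Fin d) (Fin d) ℝ × EuclideanSpace ℝ (Fin d)) →
        EuclideanSpace ℝ (Fin d) :=
      fun y => G t y.1 (fun n => if h : n < t then y.2 ⟨n, h⟩ else (1, 0)) with hΨdef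
    have hΨ : Measurable Ψ := by
      have htr : Measurable (fun y : EuclideanSpace ℝ (Fin d) ×
          (Fin t → Matrix (Fin d) (Fin d) ℝ × EuclideanSpace ℝ (Fin d)) =>
          ((y.1, fun n => if h : n < t then y.2 ⟨n, h⟩ else (1, 0)) :
            EuclideanSpace ℝ (Fin d) ×
              (ℕ → Matrix (Fin d) (Fin d) ℝ × EuclideanSpace ℝ (Fin d)))) := by
        refine measurable_fst.prodMk (measurable_pi_lambda _ fun n => ?_)
        by_cases h : n < t
        · simp only [dif_pos h]
          exact (measurable_pi_apply (⟨n, h⟩ : Fin t)).comp measurable_snd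
        · simp only [dif_neg h]
          exact measurable_const
      have := (measurable_G t).comp htr
      exact this
    have hcomp := hpair.comp hΨ
    have hfun1 : (Ψ ∘ fun ω => (Z0 ω, fun i : Fin t => W (e1 i) ω)) = X t := by
      funext ω
      show G t (Z0 ω) (fun n => if h : n < t then W n ω else (1, 0)) = X t ω
      rw [X_eq hX0 hXrec t ω]
      exact G_congr fun n hn => by rw [dif_pos hn]
    have hfun2 : (Ψ ∘ fun ω => (Z0 ω, fun i : Fin t => W (e2 i) ω)) = Xt M Z Z0 t := by
      funext ω
      show G t (Z0 ω) (fun n => if h : n < t then W (t - 1 - n) ω else (1, 0)) = Xt M Z Z0 t ω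
      rw [Xt_eq M Z Z0 t ω]
    rw [hfun1, hfun2] at hcomp
    exact hcomp
  -- a.e. convergence of the tilde process
  have htend : ∀ᵐ ω ∂μ, ∃ l, Tendsto (fun t => Xt M Z Z0 t ω) atTop (nhds l) := by
    filter_upwards [hC0, hconv] with ω h0 hc
    obtain ⟨L0, hL0⟩ := hc
    refine ⟨L0, ?_⟩
    have h1 : Tendsto (fun t => app (prodTo M t ω) (Z0 ω)) atTop (nhds 0) := by
      refine squeeze_zero_norm (fun t => norm_app_le _ _) ?_
      have := h0.mul_const ‖Z0 ω‖
      simpa using this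
    have := h1.add hL0
    simpa [Xt] using this
  obtain ⟨Lf, hLmeas, hLtend⟩ := measurable_limit_of_tendsto_metrizable_ae
    (fun n => (hXtmeas n).aemeasurable) htend
  refine ⟨μ.map Lf, Measure.isProbabilityMeasure_map hLmeas.aemeasurable, fun f => ?_⟩
  have hint : ∀ t, ∫ ω, f (X t ω) ∂μ = ∫ ω, f (Xt M Z Z0 t ω) ∂μ := fun t =>
    ((key t).comp f.continuous.measurable).integral_eq
  have hDCT : Tendsto (fun t => ∫ ω, f (Xt M Z Z0 t ω) ∂μ) atTop
      (nhds (∫ ω, f (Lf ω) ∂μ)) := by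
    apply tendsto_integral_of_dominated_convergence (bound := fun _ => ‖f‖)
    · exact fun n => (f.continuous.measurable.comp (hXtmeas n)).aestronglyMeasurable
    · exact integrable_const _
    · exact fun n => Eventually.of_forall fun ω => f.norm_coe_le_norm _
    · filter_upwards [hLtend] with ω hω
      exact (f.continuous.tendsto _).comp hω
  rw [integral_map hLmeas.aemeasurable f.continuous.aestronglyMeasurable]
  exact hDCT.congr fun t => (hint t).symm
end
end

section
/- Let d = 1, |β| > 1, c > 0, and define the deterministic AR(1) process X_0 = c, X_t = β X_{t-1} + (1-β)c. Then X_t = c for all t, so X_t converges (in distribution); yet |β^{t-1}(1-β)c| → ∞ as t → ∞, so neither sup_t |β^{t-1}(1-β)c| < ∞ nor ∑_t P(min_{1≤k≤t-1} |β^{t-k}(1-β)c| > x) < ∞ for all x > 0 holds. -/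
open MeasureTheory ProbabilityTheory Filter
open scoped ENNReal NNReal

noncomputable section

/-- The deterministic one-dimensional AR(1) process `X_t = β X_{t-1} + (1-β)c` with
`|β| > 1` and `X₀ = c` is constant (so converges in distribution), yet the perpetuity
terms `β^{t-1}(1-β)c` blow up, so neither (v) nor (vi) holds. -/
theorem statement12 (β c : ℝ) (hβ : 1 < |β|) (hc : 0 < c)
    (X : ℕ → ℝ) (hX0 : X 0 = c) (hXrec : ∀ t, X (t + 1) = β * X t + (1 - β) * c) :
    (∀ t, X t = c) ∧ Tendsto X atTop (nhds c) ∧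
    Tendsto (fun t : ℕ => |β ^ t * ((1 - β) * c)|) atTop atTop ∧
    (¬ ∃ C : ℝ, ∀ t : ℕ, |β ^ t * ((1 - β) * c)| ≤ C) ∧
    ¬ ∀ x : ℝ, 0 < x → Summable
        ({n : ℕ | ∀ e, 1 ≤ e → e ≤ n → x < |β ^ e * ((1 - β) * c)|}.indicator fun _ => (1 : ℝ)) := by
  have hβ1 : β ≠ 1 := by intro h; rw [h] at hβ; simp at hβ
  have hk : (1 - β) * c ≠ 0 := mul_ne_zero (sub_ne_zero.mpr (Ne.symm hβ1)) hc.ne'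
  have hXc : ∀ t, X t = c := by
    intro t
    induction t with
    | zero => exact hX0
    | succ n ih => rw [hXrec n, ih]; ring
  refine ⟨hXc, ?_, ?_, ?_, ?_⟩
  · have : X = fun _ => c := funext hXc
    rw [this]; exact tendsto_const_nhds
  · have h1 : Tendsto (fun t : ℕ => |β| ^ t * |(1 - β) * c|) atTop atTop :=
      Tendsto.atTop_mul_const (abs_pos.mpr hk) (tendsto_pow_atTop_atTop_of_one_lt hβ)
    refine h1.congr fun t => ?_
    simp [abs_mul, abs_pow]
  · rintro ⟨C, hC⟩
    have h1 : Tendsto (fun t : ℕ => |β| ^ t * |(1 - β) * c|) atTop atTop :=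
      Tendsto.atTop_mul_const (abs_pos.mpr hk) (tendsto_pow_atTop_atTop_of_one_lt hβ)
    obtain ⟨t, ht⟩ := (h1.eventually_gt_atTop C).exists
    exact absurd (hC t) (by rw [abs_mul, abs_pow]; exact not_le.mpr ht)
  · intro h
    set x := |β| * |(1 - β) * c| / 2 with hx
    have hxpos : 0 < x := by positivity
    have hmem : ∀ n : ℕ, n ∈ {n : ℕ | ∀ e, 1 ≤ e → e ≤ n → x < |β ^ e * ((1 - β) * c)|} := by
      intro n e he _
      have h2 : |β| ^ 1 ≤ |β| ^ e := pow_le_pow_right₀ hβ.le he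
      rw [pow_one] at h2
      have h3 := mul_pos (lt_trans one_pos hβ) (abs_pos.mpr hk)
      have h4 := mul_le_mul_of_nonneg_right h2 (abs_nonneg ((1 - β) * c))
      rw [abs_mul, abs_pow]
      nlinarith
    have := h x hxpos
    rw [Set.indicator_eq_self.mpr (fun n _ => hmem n)] at this
    exact (by norm_num : (1:ℝ) ≠ 0) ((summable_const_iff 1).mp this)
end
end

section
/- Let {(M_t, Z_t); t ≥ 1} be i.i.d. in R^{d×d} × R^d with ‖M_1 ⋯ M_t‖ → 0 a.s. Let S_{m,n} = ∑_{i=m+1}^n (∏_{j=1}^{i-1} M_j) Z_i. Suppose the partial sums S_{0,t} are tight in distribution. Then for every ε > 0, sup_{n > m} P(|S_{m,n}| > ε) → 0 as m → ∞. -/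
open MeasureTheory ProbabilityTheory Filter
open scoped ENNReal NNReal

noncomputable section

/-! ### Auxiliary lemmas -/

instance {d : ℕ} : BorelSpace (Matrix (Fin d) (Fin d) ℝ) :=
  inferInstanceAs (BorelSpace (Fin d → Fin d → ℝ))

instance {d : ℕ} : SecondCountableTopology (Matrix (Fin d) (Fin d) ℝ) :=
  inferInstanceAs (SecondCountableTopology (Fin d → Fin d → ℝ))

lemma continuous_toECLM {d : ℕ} : Continuous fun A : Matrix (Fin d) (Fin d) ℝ =>
    Matrix.toEuclideanCLM (𝕜 := ℝ) A :=
  letI L : Matrix (Fin d) (Fin d) ℝ →ₗ[ℝ]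
      (EuclideanSpace ℝ (Fin d) →L[ℝ] EuclideanSpace ℝ (Fin d)) :=
    { toFun := fun A => Matrix.toEuclideanCLM (𝕜 := ℝ) A,
      map_add' := fun A B => map_add _ A B,
      map_smul' := fun c A => by simp [map_smul (Matrix.toEuclideanCLM (𝕜 := ℝ)) c A] }
  L.continuous_of_finiteDimensional

lemma continuous_sNorm {d : ℕ} : Continuous (sNorm (d := d)) :=
  continuous_norm.comp continuous_toECLM

lemma continuous_app2 {d : ℕ} :
    Continuous fun p : Matrix (Fin d) (Fin d) ℝ × EuclideanSpace ℝ (Fin d) =>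
      app p.1 p.2 := by
  have h1 : Continuous fun p : Matrix (Fin d) (Fin d) ℝ × EuclideanSpace ℝ (Fin d) =>
      (Matrix.toEuclideanCLM (𝕜 := ℝ) p.1 :
        EuclideanSpace ℝ (Fin d) →L[ℝ] EuclideanSpace ℝ (Fin d)) :=
    continuous_toECLM.comp continuous_fst
  exact isBoundedBilinearMap_apply.continuous.comp (h1.prodMk continuous_snd)

lemma measurable_app2 {d : ℕ} :
    Measurable fun p : Matrix (Fin d) (Fin d) ℝ × EuclideanSpace ℝ (Fin d) =>
      app p.1 p.2 :=
  continuous_app2.measurable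

lemma measurable_app' {d : ℕ} {α : Type*} [MeasurableSpace α]
    {A : α → Matrix (Fin d) (Fin d) ℝ} {v : α → EuclideanSpace ℝ (Fin d)}
    (hA : Measurable A) (hv : Measurable v) :
    Measurable fun a => app (A a) (v a) := by
  show Measurable ((fun p : Matrix (Fin d) (Fin d) ℝ × EuclideanSpace ℝ (Fin d) =>
    app p.1 p.2) ∘ (fun a => (A a, v a)))
  exact measurable_app2.comp (hA.prodMk hv)

lemma measurable_mul_mat {d : ℕ} {α : Type*} [MeasurableSpace α]
    {f g : α → Matrix (Fin d) (Fin d) ℝ} (hf : Measurable f) (hg : Measurable g) :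
    Measurable fun a => f a * g a := by
  have : Continuous fun p : Matrix (Fin d) (Fin d) ℝ × Matrix (Fin d) (Fin d) ℝ =>
      p.1 * p.2 := continuous_mul
  exact this.measurable.comp (hf.prodMk hg)

lemma measurable_listprod {d : ℕ} {α : Type*} [MeasurableSpace α]
    (l : List ℕ) (f : ℕ → α → Matrix (Fin d) (Fin d) ℝ) (hf : ∀ t, Measurable (f t)) :
    Measurable fun a => (l.map (fun t => f t a)).prod := by
  induction l with
  | nil => simpa using measurable_const
  | cons h t ih =>
    simp only [List.map_cons, List.prod_cons]
    exact measurable_mul_mat (hf h) ih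

lemma measurable_prodTo {d : ℕ} {Ω : Type*} [MeasurableSpace Ω]
    {M : ℕ → Ω → Matrix (Fin d) (Fin d) ℝ} (hM : ∀ t, Measurable (M t)) (n : ℕ) :
    Measurable (prodTo M n) :=
  measurable_listprod (List.range n) M hM

lemma prodTo_split {d : ℕ} {Ω : Type*} (M : ℕ → Ω → Matrix (Fin d) (Fin d) ℝ)
    {m i : ℕ} (h : m ≤ i) (ω : Ω) :
    prodTo M i ω = prodTo M m ω * prodSeg M m i ω := by
  unfold prodTo prodSeg
  rw [show i = m + (i - m) by omega, List.range_add, List.map_append, List.prod_append,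
    List.map_map]
  simp [Function.comp_def, Nat.add_sub_cancel_left]

lemma app_mul {d : ℕ} (A B : Matrix (Fin d) (Fin d) ℝ) (v : EuclideanSpace ℝ (Fin d)) :
    app (A * B) v = app A (app B v) := by
  simp [app, map_mul, ContinuousLinearMap.mul_apply]

lemma map_shift_tuple {Ω β : Type*} [MeasurableSpace Ω] [MeasurableSpace β]
    (μ : Measure Ω) [IsProbabilityMeasure μ] {W : ℕ → Ω → β} (hW : ∀ t, Measurable (W t))
    (hind : iIndepFun W μ)
    (hid : ∀ t, IdentDistrib (W t) (W 0) μ μ) (k m : ℕ) :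
    Measure.map (fun ω (j : Fin k) => W (m + (j : ℕ)) ω) μ
      = Measure.pi (fun _ : Fin k => Measure.map (W 0) μ) := by
  classical
  refine (Measure.pi_eq ?_).symm
  intro s hs
  rw [Measure.map_apply (measurable_pi_iff.2 fun j => hW _) (MeasurableSet.univ_pi hs)]
  set sets : ℕ → Set β := fun i =>
    if h : m ≤ i ∧ i - m < k then s ⟨i - m, h.2⟩ else Set.univ with hsets
  have hmem : ∀ j : Fin k, sets (m + (j : ℕ)) = s j := by
    intro j
    have h : m ≤ m + (j : ℕ) ∧ m + (j : ℕ) - m < k := ⟨Nat.le_add_right _ _, by simp⟩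
    have hj : (⟨m + (j : ℕ) - m, h.2⟩ : Fin k) = j := Fin.ext (by simp)
    simp only [hsets, dif_pos h]
    exact congrArg s hj
  have hsetsm : ∀ i, MeasurableSet (sets i) := by
    intro i
    simp only [hsets]
    split
    · exact hs _
    · exact MeasurableSet.univ
  set S : Finset ℕ := (Finset.range k).map ⟨fun j => m + j, add_right_injective m⟩ with hS
  have key := hind.measure_inter_preimage_eq_mul (S := S) (sets := sets) (fun i _ => hsetsm i)
  have hpre : (fun ω (j : Fin k) => W (m + (j : ℕ)) ω) ⁻¹' (Set.pi Set.univ s)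
      = ⋂ i ∈ S, W i ⁻¹' sets i := by
    ext ω
    simp only [Set.mem_preimage, Set.mem_pi, Set.mem_univ, forall_true_left, Set.mem_iInter,
      hS, Finset.mem_map, Finset.mem_range, Function.Embedding.coeFn_mk]
    constructor
    · rintro h i ⟨j, hj, rfl⟩
      have := h ⟨j, hj⟩
      rw [← hmem ⟨j, hj⟩] at this
      exact this
    · intro h j
      have := h _ ⟨(j : ℕ), j.2, rfl⟩
      rwa [hmem j] at this
  rw [hpre, key, hS, Finset.prod_map]
  simp only [Function.Embedding.coeFn_mk]
  rw [← Fin.prod_univ_eq_prod_range (fun j => μ (W (m + j) ⁻¹' sets (m + j))) k]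
  refine Finset.prod_congr rfl fun j _ => ?_
  rw [hmem j, ((hid (m + (j : ℕ))).measure_mem_eq (hs j) : _),
    Measure.map_apply (hW 0) (hs j)]

/-- The block sum `∑_{j<k} (M_m ⋯ M_{m+j-1}) Z_{m+j}` has the same distribution as
`S_{0,k}`. -/
lemma identDistrib_block {d : ℕ} {Ω : Type*} [MeasurableSpace Ω] (μ : Measure Ω)
    [IsProbabilityMeasure μ]
    (M : ℕ → Ω → Matrix (Fin d) (Fin d) ℝ) (Z : ℕ → Ω → EuclideanSpace ℝ (Fin d))
    (hM : ∀ t, Measurable (M t)) (hZ : ∀ t, Measurable (Z t))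
    (hiid : IsIIDSeq μ (fun t ω => (M t ω, Z t ω))) (m k : ℕ) :
    IdentDistrib (fun ω => ∑ j ∈ Finset.range k, app (prodSeg M m (m + j) ω) (Z (m + j) ω))
      (fun ω => ∑ j ∈ Finset.range k, app (prodTo M j ω) (Z j ω)) μ μ := by
  classical
  set β := Matrix (Fin d) (Fin d) ℝ × EuclideanSpace ℝ (Fin d) with hβ
  set W : ℕ → Ω → β := fun t ω => (M t ω, Z t ω) with hWdef
  have hW : ∀ t, Measurable (W t) := fun t => (hM t).prodMk (hZ t)
  set ext : (Fin k → β) → ℕ → β := fun w t => if h : t < k then w ⟨t, h⟩ else (1, 0) with hext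
  have hext_meas : ∀ t, Measurable fun w : Fin k → β => ext w t := by
    intro t
    simp only [hext]
    split
    · exact measurable_pi_apply _
    · exact measurable_const
  set g : (Fin k → β) → EuclideanSpace ℝ (Fin d) := fun w =>
    ∑ j ∈ Finset.range k,
      app (((List.range j).map (fun t => (ext w t).1)).prod) ((ext w j).2) with hg
  have hgmeas : Measurable g := by
    refine Finset.measurable_sum _ fun j _ => ?_
    exact measurable_app'
      (measurable_listprod _ _ fun t => measurable_fst.comp (hext_meas t))
      (measurable_snd.comp (hext_meas j))
  have hgv : ∀ (a : ℕ) (ω : Ω),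
      g (fun j : Fin k => W (a + (j : ℕ)) ω)
        = ∑ j ∈ Finset.range k, app (prodSeg M a (a + j) ω) (Z (a + j) ω) := by
    intro a ω
    simp only [hg]
    refine Finset.sum_congr rfl fun j hj => ?_
    have hjk : j < k := Finset.mem_range.1 hj
    have hextv : ∀ t, t < k → ext (fun j : Fin k => W (a + (j : ℕ)) ω) t = W (a + t) ω := by
      intro t ht
      simp only [hext, dif_pos ht]
    have h1 : ((List.range j).map
          (fun t => (ext (fun j : Fin k => W (a + (j : ℕ)) ω) t).1)).prod
        = prodSeg M a (a + j) ω := by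
      unfold prodSeg
      rw [Nat.add_sub_cancel_left]
      congr 1
      refine List.map_congr_left fun t ht => ?_
      have htj : t < j := List.mem_range.1 ht
      rw [hextv t (htj.trans hjk)]
    have h2 : (ext (fun j : Fin k => W (a + (j : ℕ)) ω) j).2 = Z (a + j) ω := by
      rw [hextv j hjk]
    rw [h1, h2]
  have hgv0 : ∀ ω : Ω,
      g (fun j : Fin k => W ((j : ℕ)) ω)
        = ∑ j ∈ Finset.range k, app (prodTo M j ω) (Z j ω) := by
    intro ω
    have := hgv 0 ω
    simp only [Nat.zero_add] at this
    rw [this]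
    refine Finset.sum_congr rfl fun j hj => ?_
    unfold prodSeg prodTo
    simp
  have htup : ∀ a : ℕ, Measurable fun ω (j : Fin k) => W (a + (j : ℕ)) ω := by
    intro a
    exact measurable_pi_iff.2 fun j => hW _
  have htup0 : Measurable fun ω (j : Fin k) => W ((j : ℕ)) ω :=
    measurable_pi_iff.2 fun j => hW _
  have hmapeq : Measure.map (fun ω (j : Fin k) => W (m + (j : ℕ)) ω) μ
      = Measure.map (fun ω (j : Fin k) => W ((j : ℕ)) ω) μ := by
    rw [map_shift_tuple μ hW hiid.1 hiid.2 k m]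
    have h0 := map_shift_tuple μ hW hiid.1 hiid.2 k 0
    simp only [Nat.zero_add] at h0
    rw [h0]
  constructor
  · exact (Finset.measurable_sum _ fun j _ =>
      measurable_app' (measurable_listprod _ _ fun t => hM _) (hZ _)).aemeasurable
  · exact (Finset.measurable_sum _ fun j _ =>
      measurable_app' (measurable_listprod _ _ fun t => hM _) (hZ _)).aemeasurable
  · have e1 : (fun ω => ∑ j ∈ Finset.range k, app (prodSeg M m (m + j) ω) (Z (m + j) ω))
        = g ∘ (fun ω (j : Fin k) => W (m + (j : ℕ)) ω) := funext fun ω => (hgv m ω).symm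
    have e2 : (fun ω => ∑ j ∈ Finset.range k, app (prodTo M j ω) (Z j ω))
        = g ∘ (fun ω (j : Fin k) => W ((j : ℕ)) ω) := funext fun ω => (hgv0 ω).symm
    rw [e1, e2, ← Measure.map_map hgmeas (htup m), ← Measure.map_map hgmeas htup0, hmapeq]

/-- Under C0, if the partial sums `S_{0,t}` are tight, then
`sup_{n > m} P(|S_{m,n}| > ε) → 0` as `m → ∞`, where
`S_{m,n} = ∑_{i=m+1}^n (M₁⋯M_{i-1}) Z_i`. -/
theorem statement16 {d : ℕ} {Ω : Type*} [MeasurableSpace Ω] (μ : Measure Ω)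
    [IsProbabilityMeasure μ]
    (M : ℕ → Ω → Matrix (Fin d) (Fin d) ℝ) (Z : ℕ → Ω → EuclideanSpace ℝ (Fin d))
    (hM : ∀ t, Measurable (M t)) (hZ : ∀ t, Measurable (Z t))
    (hiid : IsIIDSeq μ (fun t ω => (M t ω, Z t ω)))
    (hC0 : ∀ᵐ ω ∂μ, Tendsto (fun t => sNorm (prodTo M t ω)) atTop (nhds 0))
    (htight : ∀ δ : ℝ≥0∞, 0 < δ → ∃ K : ℝ, ∀ t : ℕ,
      μ {ω | K < ‖∑ i ∈ Finset.range t, app (prodTo M i ω) (Z i ω)‖} < δ) :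
    ∀ ε : ℝ, 0 < ε →
      Tendsto (fun m : ℕ =>
          ⨆ n : ℕ, ⨆ _ : m < n,
            μ {ω | ε < ‖∑ i ∈ Finset.Ico m n, app (prodTo M i ω) (Z i ω)‖})
        atTop (nhds (0 : ℝ≥0∞)) := by
  intro ε hε
  rw [ENNReal.tendsto_nhds_zero]
  intro δ hδ
  obtain ⟨K₀, hK₀⟩ := htight (δ / 2) (ENNReal.half_pos hδ.ne')
  set K : ℝ := max K₀ 1 with hK
  have hKpos : (0 : ℝ) < K := lt_of_lt_of_le one_pos (le_max_right K₀ 1)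
  have hKle : K₀ ≤ K := le_max_left K₀ 1
  have htight' : ∀ t : ℕ,
      μ {ω | K < ‖∑ i ∈ Finset.range t, app (prodTo M i ω) (Z i ω)‖} ≤ δ / 2 := by
    intro t
    refine le_of_lt (lt_of_le_of_lt (measure_mono ?_) (hK₀ t))
    intro ω hω
    exact lt_of_le_of_lt hKle hω
  have hmeas : ∀ m : ℕ, Measurable fun ω => sNorm (prodTo M m ω) :=
    fun m => continuous_sNorm.measurable.comp (measurable_prodTo hM m)
  have htim : TendstoInMeasure μ (fun m ω => sNorm (prodTo M m ω)) atTop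
      (fun _ => (0 : ℝ)) :=
    tendstoInMeasure_of_tendsto_ae (fun m => (hmeas m).aestronglyMeasurable)
      (by filter_upwards [hC0] with ω h using h)
  have hεK : (0 : ℝ) < ε / K := div_pos hε hKpos
  have hev : ∀ᶠ m in atTop,
      μ {ω | ε / K ≤ dist (sNorm (prodTo M m ω)) ((fun _ : Ω => (0 : ℝ)) ω)} ≤ δ / 2 :=
    (tendstoInMeasure_iff_dist.1 htim (ε / K) hεK).eventually_le_const (ENNReal.half_pos hδ.ne')
  filter_upwards [hev] with m hm
  refine iSup_le fun n => iSup_le fun hmn => ?_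
  set A : Set Ω := {ω | ε / K ≤ dist (sNorm (prodTo M m ω)) ((fun _ : Ω => (0 : ℝ)) ω)}
    with hA
  set B : Set Ω := {ω | K < ‖∑ j ∈ Finset.range (n - m),
      app (prodSeg M m (m + j) ω) (Z (m + j) ω)‖} with hB
  have hsub : {ω | ε < ‖∑ i ∈ Finset.Ico m n, app (prodTo M i ω) (Z i ω)‖} ⊆ A ∪ B := by
    intro ω hω
    by_contra hc
    simp only [Set.mem_union, hA, hB, Set.mem_setOf_eq, not_or, not_le, not_lt] at hc
    obtain ⟨h1, h2⟩ := hc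
    have h1' : sNorm (prodTo M m ω) ≤ ε / K :=
      le_of_lt (lt_of_le_of_lt (le_trans (le_abs_self _) (le_of_eq
        (Real.dist_0_eq_abs _).symm)) h1)
    have hsumeq : ∑ i ∈ Finset.Ico m n, app (prodTo M i ω) (Z i ω)
        = app (prodTo M m ω) (∑ j ∈ Finset.range (n - m),
            app (prodSeg M m (m + j) ω) (Z (m + j) ω)) := by
      rw [Finset.sum_Ico_eq_sum_range]
      rw [Finset.sum_congr rfl (fun j _ => by
        rw [prodTo_split M (Nat.le_add_right m j) ω, app_mul])]
      unfold app
      exact (map_sum (Matrix.toEuclideanCLM (𝕜 := ℝ) (prodTo M m ω)) _ _).symm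
    rw [Set.mem_setOf_eq, hsumeq] at hω
    have hle : ‖app (prodTo M m ω) (∑ j ∈ Finset.range (n - m),
          app (prodSeg M m (m + j) ω) (Z (m + j) ω))‖
        ≤ sNorm (prodTo M m ω) * ‖∑ j ∈ Finset.range (n - m),
          app (prodSeg M m (m + j) ω) (Z (m + j) ω)‖ :=
      (Matrix.toEuclideanCLM (𝕜 := ℝ) (prodTo M m ω)).le_opNorm _
    have hb : sNorm (prodTo M m ω) * ‖∑ j ∈ Finset.range (n - m),
          app (prodSeg M m (m + j) ω) (Z (m + j) ω)‖ ≤ (ε / K) * K :=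
      mul_le_mul h1' h2 (norm_nonneg _) (le_of_lt hεK)
    rw [div_mul_cancel₀ ε (ne_of_gt hKpos)] at hb
    exact absurd hω (not_lt.2 (le_trans hle hb))
  have hμB : μ B ≤ δ / 2 := by
    have hid := identDistrib_block μ M Z hM hZ hiid m (n - m)
    have hset : MeasurableSet {x : EuclideanSpace ℝ (Fin d) | K < ‖x‖} :=
      measurableSet_lt measurable_const measurable_norm
    have heq := hid.measure_mem_eq hset
    calc μ B = μ {ω | K < ‖∑ i ∈ Finset.range (n - m), app (prodTo M i ω) (Z i ω)‖} := heq
      _ ≤ δ / 2 := htight' (n - m)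
  calc μ {ω | ε < ‖∑ i ∈ Finset.Ico m n, app (prodTo M i ω) (Z i ω)‖}
      ≤ μ (A ∪ B) := measure_mono hsub
    _ ≤ μ A + μ B := measure_union_le _ _
    _ ≤ δ / 2 + δ / 2 := add_le_add hm hμB
    _ = δ := ENNReal.add_halves δ
end
end
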